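/- arXiv:math/9902088 — 2 statements merged into one kernel-verified Lean document; each statement's English description precedes it below -/
import Mathlib

section
/- Let λ be an m-partition of r, n a removable node of λ, j_n the entry at n in t_λ, and i_n defined by (i_n)·w_λ = j_n where w_λ is defined by t^λ w_λ = t_λ. Then w_λ = s_{i_n, r} · w_{λ_n} · s_{r, j_n}, where λ_n is the m-partition obtained by removing n and w_{λ_n} is its associated permutation. -/
noncomputable section
open scoped Classical
open Finset

def pApp {r : ℕ} (w : Equiv.Perm (Fin r)) (x : ℕ) : ℕ :=
  if h : x < r then (w ⟨x, h⟩ : ℕ) else x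

def blockOf (c : List ℕ) (x : ℕ) : ℕ :=
  ((Finset.range c.length).filter (fun i => (c.take (i + 1)).sum ≤ x)).card

def inYoung {r : ℕ} (c : List ℕ) (w : Equiv.Perm (Fin r)) : Prop :=
  ∀ x : Fin r, blockOf c (pApp w (x : ℕ)) = blockOf c (x : ℕ)

def conjP (l : List ℕ) : List ℕ :=
  (List.range (l.foldr max 0)).map (fun i => l.countP (fun p => decide (i < p)))

def IsPartition (l : List ℕ) : Prop :=
  l.Pairwise (· ≥ ·) ∧ ∀ p ∈ l, 0 < p

/-- The `i`-th part (0-indexed row `i` of component `k`) of a multipartition. -/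
def part (L : List (List ℕ)) (k i : ℕ) : ℕ := (L.getD k []).getD i 0

/-- `(k,i,j)` (all 0-indexed) is a node of the Young diagram of the
multipartition `L`. -/
def mpMem (L : List (List ℕ)) (p : ℕ × ℕ × ℕ) : Prop :=
  p.2.2 < part L p.1 p.2.1

/-- The Finset of nodes of the Young diagram of `L`. -/
def mpNodes (L : List (List ℕ)) : Finset (ℕ × ℕ × ℕ) :=
  (Finset.range L.length ×ˢ
      Finset.range (L.flatten.sum + L.flatten.length + 1) ×ˢ
      Finset.range (L.flatten.sum + L.flatten.length + 1)).filter (fun p => mpMem L p)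

/-- Row-reading order on nodes: components in order, rows top to bottom,
within a row left to right. -/
def rowLt (p q : ℕ × ℕ × ℕ) : Prop :=
  p.1 < q.1 ∨ (p.1 = q.1 ∧ (p.2.1 < q.2.1 ∨ (p.2.1 = q.2.1 ∧ p.2.2 < q.2.2)))

/-- Column-reading order on nodes: components in reverse order, columns left to
right, within a column top to bottom. -/
def colLt (p q : ℕ × ℕ × ℕ) : Prop :=
  q.1 < p.1 ∨ (p.1 = q.1 ∧ (p.2.2 < q.2.2 ∨ (p.2.2 = q.2.2 ∧ p.2.1 < q.2.1)))

/-- The (0-indexed) entry at node `p` of the row-filled tableau `t^λ`. -/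
def rowRank (L : List (List ℕ)) (p : ℕ × ℕ × ℕ) : ℕ :=
  ((mpNodes L).filter (fun q => rowLt q p)).card

/-- The (0-indexed) entry at node `p` of the column-filled tableau `t_λ`. -/
def colRank (L : List (List ℕ)) (p : ℕ × ℕ × ℕ) : ℕ :=
  ((mpNodes L).filter (fun q => colLt q p)).card

/-- `w` is the permutation `w_λ` defined by `t^λ w_λ = t_λ`. -/
def wprop {r : ℕ} (L : List (List ℕ)) (w : Equiv.Perm (Fin r)) : Prop :=
  ∀ p ∈ mpNodes L, pApp w (rowRank L p) = colRank L p

/-- The concatenation `λ̄'` of the dual multipartition `λ' = (λ^(m)′,…,λ^(1)′)`. -/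
def dualConcat (L : List (List ℕ)) : List ℕ := (L.reverse.map conjP).flatten


/-- `(k,i,j)` is a removable node of the multipartition `L`. -/
def isRemovableNode (L : List (List ℕ)) (p : ℕ × ℕ × ℕ) : Prop :=
  p.2.2 + 1 = part L p.1 p.2.1 ∧ part L p.1 (p.2.1 + 1) < part L p.1 p.2.1

/-- The multipartition obtained from `L` by removing the removable node `p`. -/
def removeNode (L : List (List ℕ)) (p : ℕ × ℕ × ℕ) : List (List ℕ) :=
  L.set p.1 ((L.getD p.1 []).set p.2.1 (part L p.1 p.2.1 - 1))

/-- `s` is the cycle `s_{a,b}` (0-indexed) of `Fin r`, sending `a` to `b`,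
`x` to `x-1` for `a < x ≤ b`, and fixing everything else. -/
def IsCyc {r : ℕ} (s : Equiv.Perm (Fin r)) (a b : ℕ) : Prop :=
  a ≤ b ∧ b < r ∧ pApp s a = b ∧
    (∀ x, a < x → x ≤ b → pApp s x = x - 1) ∧
    (∀ x, x < a ∨ b < x → pApp s x = x)

-- basic lemmas
lemma pApp_lt {r : ℕ} (w : Equiv.Perm (Fin r)) {x : ℕ} (h : x < r) : pApp w x < r := by
  simp only [pApp, dif_pos h]; exact (w ⟨x, h⟩).isLt

lemma pApp_mul {r : ℕ} (f g : Equiv.Perm (Fin r)) {x : ℕ} (h : x < r) :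
    pApp (f * g) x = pApp f (pApp g x) := by
  have h2 : pApp g x < r := pApp_lt g h
  simp only [pApp, dif_pos h] at h2 ⊢
  rw [dif_pos h2]
  rfl

lemma pApp_inv {r : ℕ} (s : Equiv.Perm (Fin r)) {x y : ℕ} (hx : x < r)
    (h : pApp s x = y) : pApp s⁻¹ y = x := by
  have hy : y < r := h ▸ pApp_lt s hx
  simp only [pApp, dif_pos hx] at h
  simp only [pApp, dif_pos hy]
  have : s ⟨x, hx⟩ = ⟨y, hy⟩ := Fin.ext h
  rw [← this]; simp

lemma mpMem_elim {L : List (List ℕ)} {p : ℕ × ℕ × ℕ} (h : mpMem L p) :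
    p.1 < L.length ∧ p.2.1 < (L.getD p.1 []).length ∧ part L p.1 p.2.1 ∈ L.flatten ∧
      (L.getD p.1 []).length ≤ L.flatten.length := by
  unfold mpMem part at h
  have hpos : 0 < (L.getD p.1 []).getD p.2.1 0 := Nat.lt_of_le_of_lt (Nat.zero_le _) h
  have hk : p.1 < L.length := by
    by_contra hk
    rw [List.getD_eq_default _ _ (Nat.le_of_not_lt hk)] at hpos
    simp at hpos
  have hi : p.2.1 < (L.getD p.1 []).length := by
    by_contra hi
    rw [List.getD_eq_default _ _ (Nat.le_of_not_lt hi)] at hpos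
    simp at hpos
  have hmemL : L.getD p.1 [] ∈ L := by
    rw [List.getD_eq_getElem L [] hk]; exact List.getElem_mem hk
  have hmem : (L.getD p.1 []).getD p.2.1 0 ∈ L.flatten := by
    rw [List.mem_flatten]
    exact ⟨_, hmemL, by rw [List.getD_eq_getElem _ _ hi]; exact List.getElem_mem hi⟩
  refine ⟨hk, hi, hmem, ?_⟩
  rw [List.length_flatten]
  exact List.le_sum_of_mem (List.mem_map_of_mem (f := List.length) hmemL)

lemma mem_mpNodes {L : List (List ℕ)} {p : ℕ × ℕ × ℕ} :
    p ∈ mpNodes L ↔ mpMem L p := by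
  unfold mpNodes
  rw [Finset.mem_filter]
  constructor
  · exact fun h => h.2
  · intro h
    obtain ⟨hk, hi, hmem, hlen⟩ := mpMem_elim h
    refine ⟨?_, h⟩
    rw [Finset.mem_product, Finset.mem_product]
    refine ⟨Finset.mem_range.2 hk, Finset.mem_range.2 ?_, Finset.mem_range.2 ?_⟩
    · omega
    · have : part L p.1 p.2.1 ≤ L.flatten.sum := List.le_sum_of_mem hmem
      have := h
      unfold mpMem at this
      omega
lemma part_le_sum (L : List (List ℕ)) (k i : ℕ) : part L k i ≤ L.flatten.sum := by
  rcases Nat.eq_zero_or_pos (part L k i) with h | h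
  · omega
  · have : mpMem L (k, i, 0) := h
    exact List.le_sum_of_mem (mpMem_elim this).2.2.1

lemma sum_getD (c : List ℕ) (N : ℕ) (h : c.length ≤ N) :
    ∑ i ∈ Finset.range N, c.getD i 0 = c.sum := by
  induction c generalizing N with
  | nil => simp
  | cons a t ih =>
    obtain ⟨M, rfl⟩ : ∃ M, N = M + 1 := ⟨N - 1, by simp at h; omega⟩
    rw [Finset.sum_range_succ']
    simp only [List.getD_cons_succ, List.getD_cons_zero, List.sum_cons]
    rw [ih M (by simpa using h)]
    omega

lemma card_mpNodes (L : List (List ℕ)) : (mpNodes L).card = L.flatten.sum := by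
  classical
  set N := L.flatten.sum + L.flatten.length + 1 with hN
  unfold mpNodes
  rw [Finset.card_filter, Finset.sum_product, ]
  have hstep : ∀ k ∈ Finset.range L.length,
      (∑ q ∈ Finset.range N ×ˢ Finset.range N, if mpMem L (k, q) then 1 else 0)
        = (L.getD k []).sum := by
    intro k hk
    rw [Finset.sum_product]
    have hinner : ∀ i, (∑ j ∈ Finset.range N, if mpMem L (k, i, j) then 1 else 0)
        = part L k i := by
      intro i
      rw [← Finset.card_filter]
      have hle : part L k i ≤ N := by have := part_le_sum L k i; omega
      have : (Finset.range N).filter (fun j => mpMem L (k, i, j)) = Finset.range (part L k i) := by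
        ext j
        rw [Finset.mem_filter]; simp only [Finset.mem_range, mpMem, part]
        unfold part at hle
        constructor
        · tauto
        · intro hj; exact ⟨by omega, hj⟩
      rw [this, Finset.card_range]
    rw [Finset.sum_congr rfl (fun i _ => hinner i)]
    have hlen : (L.getD k []).length ≤ N := by
      have h1 : (L.getD k []).length ≤ L.flatten.length := by
        rw [List.length_flatten]
        refine List.le_sum_of_mem (List.mem_map_of_mem (f := List.length) ?_)
        rw [List.getD_eq_getElem L [] (Finset.mem_range.1 hk)]
        exact List.getElem_mem (Finset.mem_range.1 hk)
      omega
    exact sum_getD _ N hlen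
  rw [Finset.sum_congr rfl hstep]
  have : ∀ k ∈ Finset.range L.length, (L.getD k []).sum = (L.map List.sum).getD k 0 := by
    intro k hk
    rw [Finset.mem_range] at hk
    rw [List.getD_eq_getElem L [] hk, List.getD_eq_getElem _ _ (by simpa using hk)]
    simp
  rw [Finset.sum_congr rfl this, List.sum_flatten, ← sum_getD (L.map List.sum) L.length (by simp)]
lemma rowLt_iff (p q : ℕ × ℕ × ℕ) : rowLt p q ↔
    p.1 < q.1 ∨ (p.1 = q.1 ∧ (p.2.1 < q.2.1 ∨ (p.2.1 = q.2.1 ∧ p.2.2 < q.2.2))) := Iff.rfl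

lemma rowLt_trans {p q s : ℕ × ℕ × ℕ} (h1 : rowLt p q) (h2 : rowLt q s) : rowLt p s := by
  unfold rowLt at *; omega

lemma rowLt_irrefl (p : ℕ × ℕ × ℕ) : ¬ rowLt p p := by unfold rowLt; omega

lemma rowLt_trichotomy (p q : ℕ × ℕ × ℕ) : p = q ∨ rowLt p q ∨ rowLt q p := by
  rcases p with ⟨a, b, c⟩; rcases q with ⟨d, e, f⟩
  simp only [rowLt, Prod.mk.injEq]
  omega

lemma colLt_trans {p q s : ℕ × ℕ × ℕ} (h1 : colLt p q) (h2 : colLt q s) : colLt p s := by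
  unfold colLt at *; omega

lemma colLt_irrefl (p : ℕ × ℕ × ℕ) : ¬ colLt p p := by unfold colLt; omega

lemma colLt_trichotomy (p q : ℕ × ℕ × ℕ) : p = q ∨ colLt p q ∨ colLt q p := by
  rcases p with ⟨a, b, c⟩; rcases q with ⟨d, e, f⟩
  simp only [colLt, Prod.mk.injEq]
  omega

section RankLemmas
variable {α : Type*} [DecidableEq α] {s : Finset α}

open Classical in
lemma rank_lt_rank (lt : α → α → Prop) (htrans : ∀ {a b c}, lt a b → lt b c → lt a c)
    (hirr : ∀ a, ¬ lt a a) {p q : α} (hp : p ∈ s) (h : lt p q) :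
    (s.filter (fun x => lt x p)).card < (s.filter (fun x => lt x q)).card := by
  classical
  have hsub : insert p (s.filter (fun x => lt x p)) ⊆ s.filter (fun x => lt x q) := by
    intro x hx
    rw [Finset.mem_insert] at hx
    rcases hx with rfl | hx
    · exact Finset.mem_filter.2 ⟨hp, h⟩
    · rw [Finset.mem_filter] at hx ⊢
      exact ⟨hx.1, htrans hx.2 h⟩
  have hnot : p ∉ s.filter (fun x => lt x p) := by
    rw [Finset.mem_filter]; exact fun hx => hirr p hx.2
  calc (s.filter (fun x => lt x p)).card
      < (insert p (s.filter (fun x => lt x p))).card := by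
        rw [Finset.card_insert_of_notMem hnot]; omega
    _ ≤ _ := Finset.card_le_card hsub

lemma rank_lt_card (lt : α → α → Prop) {p : α} (hp : p ∈ s) (hirr : ∀ a, ¬ lt a a) :
    (s.filter (fun x => lt x p)).card < s.card := by
  classical
  refine Finset.card_lt_card ⟨Finset.filter_subset _ _, fun hsub => ?_⟩
  have := Finset.mem_filter.1 (hsub hp)
  exact hirr p this.2

end RankLemmas

lemma rowRank_lt_rowRank {L : List (List ℕ)} {p q : ℕ × ℕ × ℕ}
    (hp : p ∈ mpNodes L) (h : rowLt p q) : rowRank L p < rowRank L q := by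
  unfold rowRank
  exact rank_lt_rank rowLt (fun h1 h2 => rowLt_trans h1 h2) rowLt_irrefl hp h

lemma colRank_lt_colRank {L : List (List ℕ)} {p q : ℕ × ℕ × ℕ}
    (hp : p ∈ mpNodes L) (h : colLt p q) : colRank L p < colRank L q := by
  unfold colRank
  exact rank_lt_rank colLt (fun h1 h2 => colLt_trans h1 h2) colLt_irrefl hp h

lemma rowRank_lt_card {L : List (List ℕ)} {p : ℕ × ℕ × ℕ} (hp : p ∈ mpNodes L) :
    rowRank L p < (mpNodes L).card := rank_lt_card rowLt hp rowLt_irrefl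

lemma colRank_lt_card {L : List (List ℕ)} {p : ℕ × ℕ × ℕ} (hp : p ∈ mpNodes L) :
    colRank L p < (mpNodes L).card := rank_lt_card colLt hp colLt_irrefl

lemma rowRank_surj {L : List (List ℕ)} {x : ℕ} (hx : x < (mpNodes L).card) :
    ∃ p ∈ mpNodes L, rowRank L p = x := by
  classical
  have hinj : Set.InjOn (rowRank L) (mpNodes L) := by
    intro p hp q hq hpq
    rcases rowLt_trichotomy p q with h | h | h
    · exact h
    · exact absurd hpq (Nat.ne_of_lt (rowRank_lt_rowRank hp h))
    · exact absurd hpq.symm (Nat.ne_of_lt (rowRank_lt_rowRank hq h))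
  have himg : (mpNodes L).image (rowRank L) = Finset.range (mpNodes L).card := by
    apply Finset.eq_of_subset_of_card_le
    · intro y hy
      rw [Finset.mem_image] at hy
      obtain ⟨p, hp, rfl⟩ := hy
      exact Finset.mem_range.2 (rowRank_lt_card hp)
    · rw [Finset.card_range, Finset.card_image_of_injOn hinj]
  have : x ∈ (mpNodes L).image (rowRank L) := by
    rw [himg]; exact Finset.mem_range.2 hx
  rw [Finset.mem_image] at this
  obtain ⟨p, hp, hpx⟩ := this
  exact ⟨p, hp, hpx⟩
lemma mpMem_of_removable {L : List (List ℕ)} {n : ℕ × ℕ × ℕ} (hn : isRemovableNode L n) :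
    mpMem L n := by
  obtain ⟨h1, h2⟩ := hn
  unfold mpMem
  omega

lemma part_removeNode {L : List (List ℕ)} {n : ℕ × ℕ × ℕ} (hn : isRemovableNode L n)
    (k i : ℕ) : part (removeNode L n) k i =
      if k = n.1 ∧ i = n.2.1 then part L k i - 1 else part L k i := by
  obtain ⟨hk, hi, -, -⟩ := mpMem_elim (mpMem_of_removable hn)
  unfold removeNode part
  simp only [List.getD_eq_getElem?_getD] at hi ⊢
  rw [List.getElem?_set]
  by_cases h1 : n.1 = k
  · subst h1
    rw [if_pos rfl, if_pos hk]
    simp only [Option.getD_some]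
    rw [List.getElem?_set]
    by_cases h2 : n.2.1 = i
    · subst h2
      rw [if_pos rfl, if_pos hi]
      simp
    · rw [if_neg h2, if_neg (by tauto)]
  · rw [if_neg h1, if_neg (by tauto)]
lemma mpNodes_removeNode {L : List (List ℕ)} {n : ℕ × ℕ × ℕ} (hn : isRemovableNode L n) :
    mpNodes (removeNode L n) = (mpNodes L).erase n := by
  classical
  ext p
  rw [Finset.mem_erase, mem_mpNodes, mem_mpNodes]
  have h1 := hn.1
  have h2 := hn.2
  unfold mpMem
  rw [part_removeNode hn]
  rcases p with ⟨k, i, j⟩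
  simp only
  by_cases hc : k = n.1 ∧ i = n.2.1
  · obtain ⟨rfl, rfl⟩ := hc
    rw [if_pos ⟨rfl, rfl⟩]
    constructor
    · intro h
      refine ⟨?_, by omega⟩
      intro heq
      rw [← heq] at h1
      simp only at h1
      omega
    · rintro ⟨hne, hlt⟩
      have : j ≠ n.2.2 := by
        intro heq
        exact hne (by rw [heq])
      omega
  · rw [if_neg hc]
    constructor
    · intro h
      refine ⟨?_, h⟩
      rintro rfl
      exact hc ⟨rfl, rfl⟩
    · exact fun h => h.2
open Classical in
lemma rowRank_removeNode {L : List (List ℕ)} {n : ℕ × ℕ × ℕ} (hn : isRemovableNode L n)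
    (p : ℕ × ℕ × ℕ) :
    rowRank L p = rowRank (removeNode L n) p + (if rowLt n p then 1 else 0) := by
  classical
  have hnmem : n ∈ mpNodes L := mem_mpNodes.2 (mpMem_of_removable hn)
  have hns : n ∉ mpNodes (removeNode L n) := by
    rw [mpNodes_removeNode hn]; exact Finset.notMem_erase n _
  have hins : mpNodes L = insert n (mpNodes (removeNode L n)) := by
    rw [mpNodes_removeNode hn, Finset.insert_erase hnmem]
  unfold rowRank
  rw [hins, Finset.filter_insert]
  by_cases h : rowLt n p
  · rw [if_pos h, if_pos h, Finset.card_insert_of_notMem (fun hc => hns (Finset.mem_of_mem_filter n hc))]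
  · rw [if_neg h, if_neg h, Nat.add_zero]

open Classical in
lemma colRank_removeNode {L : List (List ℕ)} {n : ℕ × ℕ × ℕ} (hn : isRemovableNode L n)
    (p : ℕ × ℕ × ℕ) :
    colRank L p = colRank (removeNode L n) p + (if colLt n p then 1 else 0) := by
  classical
  have hnmem : n ∈ mpNodes L := mem_mpNodes.2 (mpMem_of_removable hn)
  have hns : n ∉ mpNodes (removeNode L n) := by
    rw [mpNodes_removeNode hn]; exact Finset.notMem_erase n _
  have hins : mpNodes L = insert n (mpNodes (removeNode L n)) := by
    rw [mpNodes_removeNode hn, Finset.insert_erase hnmem]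
  unfold colRank
  rw [hins, Finset.filter_insert]
  by_cases h : colLt n p
  · rw [if_pos h, if_pos h, Finset.card_insert_of_notMem (fun hc => hns (Finset.mem_of_mem_filter n hc))]
  · rw [if_neg h, if_neg h, Nat.add_zero]
/-- (3.3b): `w_λ = s_{i_n,r} · w_{λ_n} · s_{r,j_n}` (products in
the paper's right-action convention; for Lean's left-acting permutations the
right-hand word `apply s_{i_n,r}, then w_{λ_n}, then s_{r,j_n} = s_{j_n,r}⁻¹`
is `s2⁻¹ * wν * s1`).  Here `i_n = rowRank L n` and `j_n = colRank L n`
(0-indexed entries of `n` in `t^λ` resp. `t_λ`). -/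
theorem stmt6 (r : ℕ) (L : List (List ℕ))
    (hL : ∀ l ∈ L, IsPartition l) (hr : L.flatten.sum = r)
    (n : ℕ × ℕ × ℕ) (hn : isRemovableNode L n)
    (w wν : Equiv.Perm (Fin r))
    (hw : wprop L w) (hwv : wprop (removeNode L n) wν)
    (hfix : pApp wν (r - 1) = r - 1)
    (s1 s2 : Equiv.Perm (Fin r))
    (hs1 : IsCyc s1 (rowRank L n) (r - 1))
    (hs2 : IsCyc s2 (colRank L n) (r - 1)) :
    w = s2⁻¹ * wν * s1 := by
  classical
  have hnmem : n ∈ mpNodes L := mem_mpNodes.2 (mpMem_of_removable hn)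
  have hcard : (mpNodes L).card = r := by rw [card_mpNodes]; exact hr
  have hrpos : 0 < r := hcard ▸ Finset.card_pos.2 ⟨n, hnmem⟩
  have key : ∀ p ∈ mpNodes L, pApp (s2⁻¹ * wν * s1) (rowRank L p) = colRank L p := by
    intro p hp
    have hrowlt : rowRank L p < r := hcard ▸ rowRank_lt_card hp
    have hcollt : colRank L p < r := hcard ▸ colRank_lt_card hp
    rw [pApp_mul _ _ hrowlt, pApp_mul _ _ (pApp_lt _ hrowlt)]
    by_cases hpn : p = n
    · subst hpn
      rw [hs1.2.2.1, hfix]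
      exact pApp_inv s2 hcollt hs2.2.2.1
    · have hpν : p ∈ mpNodes (removeNode L n) := by
        rw [mpNodes_removeNode hn]; exact Finset.mem_erase.2 ⟨hpn, hp⟩
      have hab := hwv p hpν
      have hrow := rowRank_removeNode hn p
      have hcol := colRank_removeNode hn p
      have hs1app : pApp s1 (rowRank L p) = rowRank (removeNode L n) p := by
        by_cases h : rowLt n p
        · rw [if_pos h] at hrow
          have h1 : rowRank L n < rowRank L p := rowRank_lt_rowRank hnmem h
          have h2 := hs1.2.2.2.1 (rowRank L p) (by omega) (by omega)
          rw [h2]; omega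
        · have hlt : rowLt p n := by
            rcases rowLt_trichotomy p n with h' | h' | h'
            · exact absurd h' hpn
            · exact h'
            · exact absurd h' h
          rw [if_neg h] at hrow
          have h1 : rowRank L p < rowRank L n := rowRank_lt_rowRank hp hlt
          rw [hs1.2.2.2.2 (rowRank L p) (Or.inl (by omega))]
          omega
      have hs2app : pApp s2 (colRank L p) = colRank (removeNode L n) p := by
        by_cases h : colLt n p
        · rw [if_pos h] at hcol
          have h1 : colRank L n < colRank L p := colRank_lt_colRank hnmem h
          have h2 := hs2.2.2.2.1 (colRank L p) (by omega) (by omega)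
          rw [h2]; omega
        · have hlt : colLt p n := by
            rcases colLt_trichotomy p n with h' | h' | h'
            · exact absurd h' hpn
            · exact h'
            · exact absurd h' h
          rw [if_neg h] at hcol
          have h1 : colRank L p < colRank L n := colRank_lt_colRank hp hlt
          rw [hs2.2.2.2.2 (colRank L p) (Or.inl (by omega))]
          omega
      rw [hs1app, hab]
      exact pApp_inv s2 hcollt hs2app
  apply Equiv.ext
  intro x
  obtain ⟨p, hp, hpx⟩ := rowRank_surj (L := L) (x := (x : ℕ)) (hcard ▸ x.isLt)
  have h1 := hw p hp
  have h2 := key p hp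
  rw [hpx] at h1 h2
  have hx : (x : ℕ) < r := x.isLt
  simp only [pApp, dif_pos hx, Fin.eta] at h1 h2
  exact Fin.ext (h1.trans h2.symm)
end
end

section
/- Over a commutative ring R, in the Hecke algebra H of S_r, let λ be a partition of r and set x_λ = Σ_{w ∈ S_λ} T_w, y_{λ'} = Σ_{w ∈ S_{λ'}} (-q)^{-l(w)} T_w (assuming q invertible). Then the R-submodule x_λ H y_{λ'} is free of rank 1, generated by z_λ = x_λ T_{w_λ} y_{λ'}, where w_λ is the unique element of D_{λ λ'} with S_λ^{w_λ} ∩ S_{λ'} = {1}. -/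
noncomputable section
open scoped Classical
open Finset

/-- The number of inversions, i.e. the Coxeter length, of a permutation of `Fin r`. -/
def permLen {r : ℕ} (w : Equiv.Perm (Fin r)) : ℕ :=
  ((Finset.univ : Finset (Fin r × Fin r)).filter
    (fun p => p.1 < p.2 ∧ w p.2 < w p.1)).card

/-- `w` has minimal length in its double coset `S_c w S_d`
(products are written so that `a · w · b` with the paper's right-action
convention corresponds to `b * w * a` for Lean's left-acting permutations). -/
def IsDistinguished {r : ℕ} (c d : List ℕ) (w : Equiv.Perm (Fin r)) : Prop :=
  ∀ a b : Equiv.Perm (Fin r), inYoung c a → inYoung d b →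
    permLen w ≤ permLen (b * w * a)

/-- `x_c = Σ_{w ∈ S_c} T_w`. -/
def xEl {r : ℕ} {H : Type} [AddCommMonoid H] (T : Equiv.Perm (Fin r) → H)
    (c : List ℕ) : H :=
  ∑ w ∈ Finset.univ.filter (fun w => inYoung c w), T w

/-- `y_c = Σ_{w ∈ S_c} (-q)^{-ℓ(w)} T_w`. -/
def yEl {r : ℕ} {R : Type} [CommRing R] {H : Type} [AddCommMonoid H] [Module R H]
    (q : Rˣ) (T : Equiv.Perm (Fin r) → H) (c : List ℕ) : H :=
  ∑ w ∈ Finset.univ.filter (fun w => inYoung c w),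
    ((((-q)⁻¹ : Rˣ) : R) ^ permLen w) • T w


lemma Equiv.Perm.apply_inv_self {α : Type*} (f : Equiv.Perm α) (x : α) : f (f⁻¹ x) = x := by
  simp

lemma Equiv.Perm.inv_apply_self {α : Type*} (f : Equiv.Perm α) (x : α) : f⁻¹ (f x) = x := by
  simp

lemma take_sum_mono (c : List ℕ) {a b : ℕ} (h : a ≤ b) :
    (c.take a).sum ≤ (c.take b).sum := by
  have : c.take b = c.take a ++ (c.drop a).take (b - a) := by
    rw [← List.take_add]; congr 1; omega
  rw [this, List.sum_append]; omega

lemma take_sum_le (c : List ℕ) (a : ℕ) : (c.take a).sum ≤ c.sum := by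
  conv_rhs => rw [← List.take_length (l := c)]
  rcases le_total a c.length with h | h
  · exact take_sum_mono c h
  · rw [List.take_length, List.take_of_length_le h]

lemma dc_eq_range (F : Finset ℕ) (hdc : ∀ i ∈ F, ∀ j < i, j ∈ F) :
    F = Finset.range F.card := by
  rcases F.eq_empty_or_nonempty with h | h
  · rw [h]; simp
  · have key : F = Finset.range (F.max' h + 1) := by
      apply Finset.Subset.antisymm
      · intro j hj; rw [mem_range]; exact Nat.lt_succ_of_le (F.le_max' j hj)
      · intro j hj; rw [mem_range] at hj
        rcases Nat.lt_succ_iff_lt_or_eq.mp hj with h' | h'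
        · exact hdc _ (F.max'_mem h) _ h'
        · rw [h']; exact F.max'_mem h
    have hc : F.card = F.max' h + 1 := by conv_lhs => rw [key, Finset.card_range]
    rw [hc, ← key]

lemma blockOf_filter_eq (c : List ℕ) (x : ℕ) :
    ((Finset.range c.length).filter (fun i => (c.take (i + 1)).sum ≤ x)) =
      Finset.range (blockOf c x) := by
  apply dc_eq_range
  intro i hi j hj
  simp only [mem_filter, mem_range] at hi ⊢
  exact ⟨by omega, le_trans (take_sum_mono c (by omega)) hi.2⟩

lemma lt_blockOf_iff (c : List ℕ) (x i : ℕ) :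
    i < blockOf c x ↔ i < c.length ∧ (c.take (i + 1)).sum ≤ x := by
  rw [← Finset.mem_range (n := blockOf c x), ← blockOf_filter_eq, mem_filter, mem_range]

lemma blockOf_le_length (c : List ℕ) (x : ℕ) : blockOf c x ≤ c.length := by
  by_contra h
  have := (lt_blockOf_iff c x c.length).mp (by omega)
  omega

lemma take_blockOf_le (c : List ℕ) (x : ℕ) : (c.take (blockOf c x)).sum ≤ x := by
  rcases Nat.eq_zero_or_pos (blockOf c x) with h | h
  · simp [h]
  · have := (lt_blockOf_iff c x (blockOf c x - 1)).mp (by omega)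
    have e : blockOf c x - 1 + 1 = blockOf c x := by omega
    rw [e] at this; exact this.2

lemma lt_take_blockOf_succ (c : List ℕ) (x : ℕ) (h : blockOf c x < c.length) :
    x < (c.take (blockOf c x + 1)).sum := by
  by_contra h'
  have := (lt_blockOf_iff c x (blockOf c x)).mpr ⟨h, by omega⟩
  omega

lemma blockOf_lt_length (c : List ℕ) (x : ℕ) (hx : x < c.sum) :
    blockOf c x < c.length := by
  rcases Nat.lt_or_ge (blockOf c x) c.length with h | h
  · exact h
  · have hb := take_blockOf_le c x
    have : (c.take (blockOf c x)).sum = c.sum := by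
      rw [List.take_of_length_le (by omega)]
    omega

lemma blockOf_mono (c : List ℕ) {x y : ℕ} (h : x ≤ y) : blockOf c x ≤ blockOf c y := by
  apply Finset.card_le_card
  intro i hi; simp only [mem_filter] at hi ⊢; exact ⟨hi.1, le_trans hi.2 h⟩

lemma blockOf_eq_iff (c : List ℕ) (x j : ℕ) (hx : x < c.sum) :
    blockOf c x = j ↔ (c.take j).sum ≤ x ∧ x < (c.take (j + 1)).sum := by
  constructor
  · rintro rfl
    exact ⟨take_blockOf_le c x, lt_take_blockOf_succ c x (blockOf_lt_length c x hx)⟩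
  · rintro ⟨h1, h2⟩
    have hl := blockOf_lt_length c x hx
    have hb1 := take_blockOf_le c x
    have hb2 := lt_take_blockOf_succ c x hl
    rcases Nat.lt_trichotomy (blockOf c x) j with h | h | h
    · have := take_sum_mono c (show blockOf c x + 1 ≤ j by omega); omega
    · exact h
    · have := take_sum_mono c (show j + 1 ≤ blockOf c x by omega); omega

lemma blockOf_between (c : List ℕ) {a b t : ℕ} (hab : blockOf c a = blockOf c b)
    (h1 : a ≤ t) (h2 : t ≤ b) : blockOf c t = blockOf c a := by
  have := blockOf_mono c h1; have := blockOf_mono c h2; omega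

lemma blockOf_count (c : List ℕ) (j : ℕ) (hj : j < c.length) :
    ((Finset.range c.sum).filter (fun x => blockOf c x = j)).card = c.get ⟨j, hj⟩ := by
  have hs : (c.take (j+1)).sum = (c.take j).sum + c.get ⟨j, hj⟩ := by
    simpa [List.get_eq_getElem] using List.sum_take_succ c j hj
  have : ((Finset.range c.sum).filter (fun x => blockOf c x = j)) =
      Finset.Ico ((c.take j).sum) ((c.take (j+1)).sum) := by
    ext t
    simp only [mem_filter, mem_range, Finset.mem_Ico]
    constructor
    · rintro ⟨ht, hb⟩; exact (blockOf_eq_iff c t j ht).mp hb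
    · rintro ⟨h1, h2⟩
      have ht : t < c.sum := lt_of_lt_of_le h2 (take_sum_le c (j+1))
      exact ⟨ht, (blockOf_eq_iff c t j ht).mpr ⟨h1, h2⟩⟩
  rw [this, Nat.card_Ico]; omega

def Invs {r : ℕ} (w : Equiv.Perm (Fin r)) : Finset (Fin r × Fin r) :=
  (Finset.univ : Finset (Fin r × Fin r)).filter (fun p => p.1 < p.2 ∧ w p.2 < w p.1)

lemma permLen_eq {r : ℕ} (w : Equiv.Perm (Fin r)) : permLen w = (Invs w).card := rfl

lemma permLen_one {r : ℕ} : permLen (1 : Equiv.Perm (Fin r)) = 0 := by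
  rw [permLen, Finset.card_eq_zero, Finset.filter_eq_empty_iff]
  rintro p -
  simp only [Equiv.Perm.one_apply, not_and]
  intro h; exact asymm h

lemma swap_val {r : ℕ} (a b z : Fin r) :
    ((Equiv.swap a b z : Fin r) : ℕ)
      = if (z : ℕ) = (a : ℕ) then (b : ℕ) else if (z : ℕ) = (b : ℕ) then (a : ℕ) else (z : ℕ) := by
  rw [Equiv.swap_apply_def]
  split_ifs with u1 u2 u3 u4 u5 <;> first | rfl | (simp_all [Fin.ext_iff])

lemma swap_lt_iff {r : ℕ} {a b : Fin r} (hab : (b : ℕ) = (a : ℕ) + 1) (x y : Fin r)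
    (h1 : ¬(x = a ∧ y = b)) (h2 : ¬(x = b ∧ y = a)) :
    (Equiv.swap a b x < Equiv.swap a b y) ↔ x < y := by
  have hx := swap_val a b x
  have hy := swap_val a b y
  have e1 : ¬((x : ℕ) = (a : ℕ) ∧ (y : ℕ) = (b : ℕ)) :=
    fun hc => h1 ⟨Fin.ext hc.1, Fin.ext hc.2⟩
  have e2 : ¬((x : ℕ) = (b : ℕ) ∧ (y : ℕ) = (a : ℕ)) :=
    fun hc => h2 ⟨Fin.ext hc.1, Fin.ext hc.2⟩
  rw [Fin.lt_def, Fin.lt_def, hx, hy]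
  split_ifs <;> omega

lemma exists_descent {r : ℕ} (w : Equiv.Perm (Fin r)) (hw : w ≠ 1) :
    ∃ a b : Fin r, (b : ℕ) = (a : ℕ) + 1 ∧ w b < w a := by
  by_contra hcon
  push_neg at hcon
  have hstep : ∀ a b : Fin r, (b : ℕ) = (a : ℕ) + 1 → w a < w b := by
    intro a b h
    rcases lt_or_eq_of_le (hcon a b h) with h' | h'
    · exact h'
    · exfalso
      have := w.injective h'
      simp only [Fin.ext_iff] at this
      omega
  have key : ∀ (d : ℕ) (a b : Fin r), (b : ℕ) = (a : ℕ) + d + 1 → w a < w b := by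
    intro d
    induction d with
    | zero => intro a b h; exact hstep a b (by omega)
    | succ n ih =>
      intro a b h
      have hm : (a : ℕ) + n + 1 < r := by have := b.2; omega
      exact lt_trans (ih a ⟨(a : ℕ) + n + 1, hm⟩ rfl) (hstep _ b (by simp; omega))
  have hsm : StrictMono w := by
    intro a b hab
    exact key ((b : ℕ) - (a : ℕ) - 1) a b (by have : (a : ℕ) < b := hab; omega)
  have : w = (1 : Equiv.Perm (Fin r)) := by
    have := (hsm.range_inj (strictMono_id (α := Fin r))).mp ?_
    · exact Equiv.ext fun x => congrFun this x
    · rw [Set.range_id, Set.range_eq_univ.mpr w.surjective]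
  exact hw this

lemma invs_swap_mul {r : ℕ} {a b : Fin r} (hab : (b : ℕ) = (a : ℕ) + 1)
    (w : Equiv.Perm (Fin r)) (hw : w⁻¹ a < w⁻¹ b) :
    Invs (Equiv.swap a b * w) = insert (w⁻¹ a, w⁻¹ b) (Invs w) := by
  have hvv : a < b := by rw [Fin.lt_def]; omega
  ext p
  simp only [Invs, mem_filter, mem_univ, true_and, mem_insert]
  simp only [Equiv.Perm.mul_apply]
  constructor
  · rintro ⟨h1, h2⟩
    by_cases hb : w p.2 = b ∧ w p.1 = a
    · left
      have e2 : p.2 = w⁻¹ b := by rw [← hb.1, Equiv.Perm.inv_apply_self]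
      have e1 : p.1 = w⁻¹ a := by rw [← hb.2, Equiv.Perm.inv_apply_self]
      rw [Prod.ext_iff]; exact ⟨e1, e2⟩
    · right
      refine ⟨h1, ?_⟩
      by_cases hb2 : w p.2 = a ∧ w p.1 = b
      · exfalso
        have e2 : p.2 = w⁻¹ a := by rw [← hb2.1, Equiv.Perm.inv_apply_self]
        have e1 : p.1 = w⁻¹ b := by rw [← hb2.2, Equiv.Perm.inv_apply_self]
        rw [e1, e2] at h1
        exact absurd h1 (asymm hw)
      · rw [← swap_lt_iff hab (w p.2) (w p.1) hb2 hb]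
        exact h2
  · rintro (hp | ⟨h1, h2⟩)
    · rw [hp]
      refine ⟨hw, ?_⟩
      simp only [Equiv.Perm.apply_inv_self]
      rw [Equiv.swap_apply_left, Equiv.swap_apply_right]
      exact hvv
    · refine ⟨h1, ?_⟩
      rw [swap_lt_iff hab (w p.2) (w p.1) ?_ ?_]
      · exact h2
      · rintro ⟨hc1, hc2⟩
        have e2 : p.2 = w⁻¹ a := by rw [← hc1, Equiv.Perm.inv_apply_self]
        have e1 : p.1 = w⁻¹ b := by rw [← hc2, Equiv.Perm.inv_apply_self]
        rw [e1, e2] at h1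
        exact absurd (lt_trans h1 hw) (lt_irrefl _)
      · rintro ⟨hc1, hc2⟩
        rw [hc1, hc2] at h2
        exact absurd (lt_trans h2 hvv) (lt_irrefl _)

lemma permLen_swap_mul_of_lt {r : ℕ} {a b : Fin r} (hab : (b : ℕ) = (a : ℕ) + 1)
    (w : Equiv.Perm (Fin r)) (hw : w⁻¹ a < w⁻¹ b) :
    permLen (Equiv.swap a b * w) = permLen w + 1 := by
  rw [permLen_eq, invs_swap_mul hab w hw, Finset.card_insert_of_notMem, permLen_eq]
  simp only [Invs, mem_filter, mem_univ, true_and, not_and]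
  intro
  simp only [Equiv.Perm.apply_inv_self]
  intro hc
  rw [Fin.lt_def] at hc; omega

lemma permLen_swap_mul {r : ℕ} {a b : Fin r} (hab : (b : ℕ) = (a : ℕ) + 1)
    (w : Equiv.Perm (Fin r)) :
    (w⁻¹ a < w⁻¹ b ∧ permLen (Equiv.swap a b * w) = permLen w + 1) ∨
    (w⁻¹ b < w⁻¹ a ∧ permLen w = permLen (Equiv.swap a b * w) + 1) := by
  have hne : w⁻¹ a ≠ w⁻¹ b := by
    intro h
    have := w⁻¹.injective h
    simp only [Fin.ext_iff] at this; omega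
  rcases lt_or_gt_of_ne hne with h | h
  · exact Or.inl ⟨h, permLen_swap_mul_of_lt hab w h⟩
  · refine Or.inr ⟨h, ?_⟩
    have key := permLen_swap_mul_of_lt hab (Equiv.swap a b * w) ?_
    · have e : Equiv.swap a b * (Equiv.swap a b * w) = w := by
        rw [← mul_assoc, Equiv.swap_mul_self, one_mul]
      rwa [e] at key
    · have e : (Equiv.swap a b * w)⁻¹ = w⁻¹ * Equiv.swap a b := by
        rw [mul_inv_rev, Equiv.swap_inv]
      rw [e]
      simp only [Equiv.Perm.mul_apply, Equiv.swap_apply_left, Equiv.swap_apply_right]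
      exact h

lemma permLen_mul_le {r : ℕ} (u v : Equiv.Perm (Fin r)) :
    permLen (v * u) ≤ permLen v + permLen u := by
  generalize hn : permLen v = n
  induction n using Nat.strong_induction_on generalizing v with
  | _ n ih =>
    by_cases hv : v = 1
    · rw [hv, one_mul]; omega
    · obtain ⟨a, b, hab, hd⟩ := exists_descent v⁻¹ (by simp [hv])
      rcases permLen_swap_mul hab v with ⟨h1, h2⟩ | ⟨h1, h2⟩
      · exact absurd h1 (asymm hd)
      · have hvu : v * u = Equiv.swap a b * ((Equiv.swap a b * v) * u) := by
          rw [← mul_assoc, ← mul_assoc, Equiv.swap_mul_self, one_mul]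
        have hle : permLen (v * u) ≤ permLen ((Equiv.swap a b * v) * u) + 1 := by
          rcases permLen_swap_mul hab ((Equiv.swap a b * v) * u) with ⟨_, h4⟩ | ⟨_, h4⟩ <;>
            rw [hvu] <;> omega
        have := ih (permLen (Equiv.swap a b * v)) (by omega) (Equiv.swap a b * v) rfl
        omega

lemma swap_swap_apply {r : ℕ} (a b z : Fin r) :
    Equiv.swap a b (Equiv.swap a b z) = z := Equiv.swap_apply_self a b z

lemma permLen_mul_swap_of_lt {r : ℕ} {a b : Fin r} (hab : (b : ℕ) = (a : ℕ) + 1)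
    (w : Equiv.Perm (Fin r)) (hw : w a < w b) :
    permLen (w * Equiv.swap a b) = permLen w + 1 := by
  set t := Equiv.swap a b with ht
  have hvv : a < b := by rw [Fin.lt_def]; omega
  have hein : (a, b) ∈ Invs (w * t) := by
    simp only [Invs, mem_filter, mem_univ, true_and]
    simp only [Equiv.Perm.mul_apply]
    refine ⟨hvv, ?_⟩
    rw [ht, Equiv.swap_apply_left, Equiv.swap_apply_right]
    exact hw
  have henotin : (a, b) ∉ Invs w := by
    simp only [Invs, mem_filter, mem_univ, true_and, not_and]
    intro _ hc
    exact absurd (lt_trans hc hw) (lt_irrefl _)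
  have hcard : ((Invs (w * t)).erase (a, b)).card = ((Invs w).erase (a, b)).card := by
    apply Finset.card_bij' (i := fun q _ => (t q.1, t q.2)) (j := fun q _ => (t q.1, t q.2))
    · intro q hq
      rw [Finset.mem_erase] at hq ⊢
      obtain ⟨hqne, hq⟩ := hq
      simp only [Invs, mem_filter, mem_univ, true_and] at hq ⊢
      simp only [Equiv.Perm.mul_apply] at hq ⊢
      obtain ⟨ho, hi⟩ := hq
      have hA : ¬(q.1 = a ∧ q.2 = b) := by
        intro hc; exact hqne (Prod.ext hc.1 hc.2)
      have hB : ¬(q.1 = b ∧ q.2 = a) := by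
        intro hc; rw [hc.1, hc.2] at ho; exact absurd (lt_trans ho hvv) (lt_irrefl _)
      refine ⟨?_, ⟨(swap_lt_iff hab q.1 q.2 hA hB).mpr ho, hi⟩⟩
      intro hc
      rw [Prod.ext_iff] at hc
      have e1 : q.1 = b := by
        have := congrArg t hc.1; rwa [ht, swap_swap_apply, Equiv.swap_apply_left] at this
      have e2 : q.2 = a := by
        have := congrArg t hc.2; rwa [ht, swap_swap_apply, Equiv.swap_apply_right] at this
      rw [e1, e2] at ho
      exact absurd (lt_trans ho hvv) (lt_irrefl _)
    · intro q hq
      rw [Finset.mem_erase] at hq ⊢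
      obtain ⟨hqne, hq⟩ := hq
      simp only [Invs, mem_filter, mem_univ, true_and] at hq ⊢
      simp only [Equiv.Perm.mul_apply] at hq ⊢
      obtain ⟨ho, hi⟩ := hq
      have hA : ¬(q.1 = a ∧ q.2 = b) := by
        intro hc; exact hqne (Prod.ext hc.1 hc.2)
      have hB : ¬(q.1 = b ∧ q.2 = a) := by
        intro hc; rw [hc.1, hc.2] at ho; exact absurd (lt_trans ho hvv) (lt_irrefl _)
      refine ⟨?_, ⟨(swap_lt_iff hab q.1 q.2 hA hB).mpr ho, ?_⟩⟩
      · intro hc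
        rw [Prod.ext_iff] at hc
        have e1 : q.1 = b := by
          have := congrArg t hc.1; rwa [ht, swap_swap_apply, Equiv.swap_apply_left] at this
        have e2 : q.2 = a := by
          have := congrArg t hc.2; rwa [ht, swap_swap_apply, Equiv.swap_apply_right] at this
        rw [e1, e2] at ho
        exact absurd (lt_trans ho hvv) (lt_irrefl _)
      · rw [ht, swap_swap_apply, swap_swap_apply]
        exact hi
    · intro q hq; rw [ht]; simp [swap_swap_apply]
    · intro q hq; rw [ht]; simp [swap_swap_apply]
  have h1 := Finset.card_erase_add_one hein
  have h2 : ((Invs w).erase (a, b)) = Invs w := Finset.erase_eq_of_notMem henotin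
  rw [permLen_eq, permLen_eq]
  rw [h2] at hcard
  omega

lemma permLen_mul_swap {r : ℕ} {a b : Fin r} (hab : (b : ℕ) = (a : ℕ) + 1)
    (w : Equiv.Perm (Fin r)) :
    (w a < w b ∧ permLen (w * Equiv.swap a b) = permLen w + 1) ∨
    (w b < w a ∧ permLen w = permLen (w * Equiv.swap a b) + 1) := by
  have hne : w a ≠ w b := by
    intro h
    have := w.injective h
    simp only [Fin.ext_iff] at this; omega
  rcases lt_or_gt_of_ne hne with h | h
  · exact Or.inl ⟨h, permLen_mul_swap_of_lt hab w h⟩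
  · refine Or.inr ⟨h, ?_⟩
    have key := permLen_mul_swap_of_lt hab (w * Equiv.swap a b) ?_
    · have e : (w * Equiv.swap a b) * Equiv.swap a b = w := by
        rw [mul_assoc, Equiv.swap_mul_self, mul_one]
      rwa [e] at key
    · simp only [Equiv.Perm.mul_apply, Equiv.swap_apply_left, Equiv.swap_apply_right]
      exact h

lemma pApp_coe {r : ℕ} (w : Equiv.Perm (Fin r)) (x : Fin r) :
    pApp w (x : ℕ) = (w x : ℕ) := by
  rw [pApp, dif_pos x.2, Fin.eta]

lemma inYoung_iff {r : ℕ} (c : List ℕ) (w : Equiv.Perm (Fin r)) :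
    inYoung c w ↔ ∀ x : Fin r, blockOf c ((w x : Fin r) : ℕ) = blockOf c (x : ℕ) := by
  unfold inYoung
  constructor <;> intro h x <;> have := h x <;> rwa [pApp_coe] at * 

lemma inYoung_one {r : ℕ} (c : List ℕ) : inYoung c (1 : Equiv.Perm (Fin r)) := by
  rw [inYoung_iff]; intro x; rfl

lemma inYoung_mul {r : ℕ} (c : List ℕ) {a b : Equiv.Perm (Fin r)}
    (ha : inYoung c a) (hb : inYoung c b) : inYoung c (a * b) := by
  rw [inYoung_iff] at *
  intro x
  rw [Equiv.Perm.mul_apply, ha (b x), hb x]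

lemma inYoung_inv {r : ℕ} (c : List ℕ) {a : Equiv.Perm (Fin r)}
    (ha : inYoung c a) : inYoung c a⁻¹ := by
  rw [inYoung_iff] at *
  intro x
  have := ha (a⁻¹ x)
  rw [Equiv.Perm.apply_inv_self] at this
  exact this.symm

lemma inYoung_swap {r : ℕ} (c : List ℕ) {a b : Fin r}
    (h : blockOf c (a : ℕ) = blockOf c (b : ℕ)) : inYoung c (Equiv.swap a b) := by
  rw [inYoung_iff]
  intro x
  rw [swap_val]
  split_ifs with h1 h2
  · rw [h1, ← h]
  · rw [h2, h]
  · rfl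

lemma exists_block_descent {r : ℕ} (c : List ℕ) (a : Equiv.Perm (Fin r))
    (ha : inYoung c a) (hne : a ≠ 1) :
    ∃ x y : Fin r, (y : ℕ) = (x : ℕ) + 1 ∧ blockOf c (x : ℕ) = blockOf c (y : ℕ)
      ∧ a y < a x := by
  obtain ⟨x, y, hxy, hd⟩ := exists_descent a hne
  refine ⟨x, y, hxy, ?_, hd⟩
  rw [inYoung_iff] at ha
  have h1 : blockOf c (x : ℕ) ≤ blockOf c (y : ℕ) := blockOf_mono c (by omega)
  have h2 : blockOf c ((a y : Fin r) : ℕ) ≤ blockOf c ((a x : Fin r) : ℕ) :=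
    blockOf_mono c (le_of_lt hd)
  have e1 := ha x
  have e2 := ha y
  omega

-- list counting bridges
lemma countP_card (l : List ℕ) (p : ℕ → Prop) [DecidablePred p] :
    ((Finset.range l.length).filter (fun i => p (l.getD i 0))).card
      = l.countP (fun x => decide (p x)) := by
  induction l using List.reverseRecOn with
  | nil => simp
  | append_singleton l' a ih =>
    rw [List.countP_append, List.length_append, List.length_singleton,
      Finset.range_add_one, Finset.filter_insert]
    have hset : ∀ i ∈ Finset.range l'.length,
        ((l' ++ [a]).getD i 0) = l'.getD i 0 := by
      intro i hi
      rw [Finset.mem_range] at hi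
      rw [List.getD_eq_getElem _ _ (by simp; omega), List.getElem_append_left hi,
        List.getD_eq_getElem _ _ hi]
    have hfe : (Finset.range l'.length).filter (fun i => p ((l' ++ [a]).getD i 0))
        = (Finset.range l'.length).filter (fun i => p (l'.getD i 0)) := by
      apply Finset.filter_congr
      intro i hi
      rw [hset i hi]
    have hlast : (l' ++ [a]).getD l'.length 0 = a := by
      rw [List.getD_eq_getElem _ _ (by simp), List.getElem_append_right (le_refl _)]
      simp
    rw [hlast]
    split_ifs with hp
    · rw [Finset.card_insert_of_notMem (by simp), hfe, ih]
      simp [hp]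
    · rw [hfe, ih]
      simp [hp]

lemma sum_getD_s10 (l : List ℕ) :
    ∑ i ∈ Finset.range l.length, l.getD i 0 = l.sum := by
  induction l using List.reverseRecOn with
  | nil => simp
  | append_singleton l' a ih =>
    rw [List.length_append, List.length_singleton, Finset.sum_range_succ]
    have hset : ∀ i ∈ Finset.range l'.length,
        ((l' ++ [a]).getD i 0) = l'.getD i 0 := by
      intro i hi
      rw [Finset.mem_range] at hi
      rw [List.getD_eq_getElem _ _ (by simp; omega), List.getElem_append_left hi,
        List.getD_eq_getElem _ _ hi]
    rw [Finset.sum_congr rfl hset, ih]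
    have : (l' ++ [a]).getD l'.length 0 = a := by
      rw [List.getD_eq_getElem _ _ (by simp), List.getElem_append_right (le_refl _)]
      simp
    rw [this, List.sum_append, List.sum_singleton]

lemma le_foldr_max (l : List ℕ) : ∀ p ∈ l, p ≤ l.foldr max 0 := by
  induction l with
  | nil => simp
  | cons a t ih =>
    intro p hp
    rcases List.mem_cons.mp hp with rfl | hp
    · simp [List.foldr]
    · exact le_trans (ih p hp) (by simp [List.foldr])

lemma conjP_length (l : List ℕ) : (conjP l).length = l.foldr max 0 := by
  simp [conjP]

lemma conjP_getD (l : List ℕ) (j : ℕ) (hj : j < l.foldr max 0) :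
    (conjP l).getD j 0 = l.countP (fun p => decide (j < p)) := by
  rw [List.getD_eq_getElem _ _ (by rw [conjP_length]; exact hj)]
  simp [conjP]

lemma conjP_card (l : List ℕ) (j : ℕ) (hj : j < l.foldr max 0) :
    (conjP l).getD j 0
      = ((Finset.range l.length).filter (fun i => j < l.getD i 0)).card := by
  rw [conjP_getD l j hj, countP_card l (fun x => j < x)]

lemma conjP_sum (l : List ℕ) : (conjP l).sum = l.sum := by
  rw [← sum_getD_s10 (conjP l), conjP_length]
  have h1 : ∀ j ∈ Finset.range (l.foldr max 0), (conjP l).getD j 0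
      = ∑ i ∈ Finset.range l.length, if j < l.getD i 0 then 1 else 0 := by
    intro j hj
    rw [Finset.mem_range] at hj
    rw [conjP_card l j hj, Finset.card_filter]
  rw [Finset.sum_congr rfl h1, Finset.sum_comm, ← sum_getD_s10 l]
  apply Finset.sum_congr rfl
  intro i hi
  rw [Finset.mem_range] at hi
  have hle : l.getD i 0 ≤ l.foldr max 0 := by
    apply le_foldr_max
    rw [List.getD_eq_getElem _ _ hi]
    exact List.getElem_mem hi
  rw [← Finset.card_filter]
  have : (Finset.range (l.foldr max 0)).filter (fun x => x < l.getD i 0)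
      = Finset.range (l.getD i 0) := by
    ext t
    simp only [Finset.mem_filter, Finset.mem_range]
    omega
  rw [this, Finset.card_range]

section
variable {r : ℕ}


lemma mono_on_block (c : List ℕ) (w : Equiv.Perm (Fin r))
    (h : ∀ x y : Fin r, (y : ℕ) = (x : ℕ) + 1 → blockOf c (x : ℕ) = blockOf c (y : ℕ) → w x < w y) :
    ∀ x y : Fin r, (x : ℕ) < (y : ℕ) → blockOf c (x : ℕ) = blockOf c (y : ℕ) → w x < w y := by
  have key : ∀ d : ℕ, ∀ x y : Fin r, (y : ℕ) = (x : ℕ) + d + 1 →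
      blockOf c (x : ℕ) = blockOf c (y : ℕ) → w x < w y := by
    intro d
    induction d with
    | zero => intro x y hxy hb; exact h x y (by omega) hb
    | succ m ih =>
      intro x y hxy hb
      have hm : (x : ℕ) + m + 1 < r := by have := y.2; omega
      have hbz : blockOf c ((x : ℕ) + m + 1) = blockOf c (x : ℕ) :=
        blockOf_between c hb (by omega) (by omega)
      have hzv : (((⟨(x : ℕ) + m + 1, hm⟩ : Fin r) : Fin r) : ℕ) = (x : ℕ) + m + 1 := rfl
      refine lt_trans (ih x ⟨(x : ℕ) + m + 1, hm⟩ (by rw [hzv]) ?_)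
        (h ⟨(x : ℕ) + m + 1, hm⟩ y (by rw [hzv]; omega) ?_)
      · rw [hzv, hbz]
      · rw [hzv, hbz, hb]
  intro x y hxy hb
  exact key ((y : ℕ) - (x : ℕ) - 1) x y (by omega) hb

lemma card_fin_filter (p : ℕ → Prop) [DecidablePred p] :
    ((Finset.univ : Finset (Fin r)).filter (fun x : Fin r => p (x : ℕ))).card
      = ((Finset.range r).filter p).card := by
  apply Finset.card_bij (fun (x : Fin r) (_ : x ∈ (Finset.univ : Finset (Fin r)).filter
    (fun x : Fin r => p (x : ℕ))) => (x : ℕ))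
  · intro x hx
    rw [Finset.mem_filter] at hx
    rw [Finset.mem_filter, Finset.mem_range]
    exact ⟨x.2, hx.2⟩
  · intro x _ y _ hxy
    exact Fin.ext hxy
  · intro t ht
    rw [Finset.mem_filter, Finset.mem_range] at ht
    exact ⟨⟨t, ht.1⟩, Finset.mem_filter.mpr ⟨Finset.mem_univ _, ht.2⟩, rfl⟩

lemma strictmono_id_of (n : ℕ) (f : ℕ → ℕ) (hlt : ∀ k < n, f k < n)
    (hmono : ∀ j k, j < k → k < n → f j < f k) : ∀ k < n, f k = k := by
  have hub : ∀ k, k < n → k ≤ f k := by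
    intro k
    induction k with
    | zero => intro _; omega
    | succ m ih =>
      intro h
      have h1 : f m < f (m + 1) := hmono m (m + 1) (by omega) h
      have h2 : m ≤ f m := ih (by omega)
      omega
  have hgap : ∀ d k, k + d < n → f k + d ≤ f (k + d) := by
    intro d
    induction d with
    | zero => intro k h; simp
    | succ m ih =>
      intro k h
      have e : k + (m + 1) = (k + m) + 1 := by omega
      rw [e]
      have h1 : f k + m ≤ f (k + m) := ih k (by omega)
      have h2 : f (k + m) < f (k + m + 1) := hmono (k + m) (k + m + 1) (by omega) (by omega)
      omega
  intro k hk
  have h1 := hub k hk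
  have h2 := hgap (n - 1 - k) k (by omega)
  have h3 := hlt (k + (n - 1 - k)) (by omega)
  omega

set_option maxHeartbeats 2000000 in
theorem dist_formula (l : List ℕ) (hl : IsPartition l) (hsum : l.sum = r)
    (w : Equiv.Perm (Fin r))
    (h1 : ∀ x y : Fin r, (y : ℕ) = (x : ℕ) + 1 → blockOf l (x : ℕ) = blockOf l (y : ℕ) → w x < w y)
    (h2 : ∀ x y : Fin r, (y : ℕ) = (x : ℕ) + 1 →
      blockOf (conjP l) (x : ℕ) = blockOf (conjP l) (y : ℕ) → w⁻¹ x < w⁻¹ y)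
    (hcfg : ∀ x y u v : Fin r, (y : ℕ) = (x : ℕ) + 1 → (v : ℕ) = (u : ℕ) + 1 →
      blockOf l (x : ℕ) = blockOf l (y : ℕ) →
      blockOf (conjP l) (u : ℕ) = blockOf (conjP l) (v : ℕ) →
      w x = u → w y = v → False) :
    ∀ x : Fin r,
      blockOf (conjP l) ((w x : Fin r) : ℕ) = (x : ℕ) - (l.take (blockOf l (x : ℕ))).sum
      ∧ ((w x : Fin r) : ℕ)
        = ((conjP l).take ((x : ℕ) - (l.take (blockOf l (x : ℕ))).sum)).sum
          + blockOf l (x : ℕ) := by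
  have mono1 := mono_on_block l w h1
  have mono2 := mono_on_block (conjP l) w⁻¹ h2
  have hμsum : (conjP l).sum = r := by rw [conjP_sum, hsum]
  have bL : ∀ x : Fin r, blockOf l (x : ℕ) < l.length :=
    fun x => blockOf_lt_length l _ (by rw [hsum]; exact x.2)
  have bM : ∀ z : Fin r, blockOf (conjP l) (z : ℕ) < (conjP l).length :=
    fun z => blockOf_lt_length (conjP l) _ (by rw [hμsum]; exact z.2)
  have hKfold : (conjP l).length = l.foldr max 0 := conjP_length l
  set μ := conjP l with hμdef
  set K := μ.length with hK
  set len := l.length with hlen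
  set M : ℕ → ℕ → ℕ := fun j i =>
    ((Finset.univ : Finset (Fin r)).filter
      (fun x : Fin r => blockOf l (x : ℕ) = i ∧ blockOf μ ((w x : Fin r) : ℕ) = j)).card with hMdef
  -- M ≤ 1
  have hM1 : ∀ j i, M j i ≤ 1 := by
    intro j i
    by_contra hc
    rw [not_le, Finset.one_lt_card] at hc
    obtain ⟨x1, hx1, x2, hx2, hne12⟩ := hc
    simp only [Finset.mem_filter, Finset.mem_univ, true_and] at hx1 hx2
    have main : ∀ x1 x2 : Fin r, (x1 : ℕ) < (x2 : ℕ) →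
        blockOf l (x1 : ℕ) = blockOf l (x2 : ℕ) →
        blockOf μ ((w x1 : Fin r) : ℕ) = blockOf μ ((w x2 : Fin r) : ℕ) → False := by
      intro x1 x2 hlt hbl hbm
      have hwlt : w x1 < w x2 := mono1 x1 x2 hlt hbl
      have huw2 : ((w x1 : Fin r) : ℕ) < ((w x2 : Fin r) : ℕ) := hwlt
      have hv2 : ((w x1 : Fin r) : ℕ) + 1 < r := by
        have hb := (w x2).2; omega
      set u : Fin r := w x1 with hu
      set v : Fin r := ⟨(u : ℕ) + 1, hv2⟩ with hv
      have hvval : (v : ℕ) = (u : ℕ) + 1 := rfl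
      have hvle : (v : ℕ) ≤ ((w x2 : Fin r) : ℕ) := by omega
      have hbv : blockOf μ (v : ℕ) = blockOf μ (u : ℕ) :=
        blockOf_between μ hbm (by omega) hvle
      have hy : w⁻¹ u < w⁻¹ v := mono2 u v (by omega) hbv.symm
      rw [hu, Equiv.Perm.inv_apply_self] at hy
      have hyval : (x1 : ℕ) < ((w⁻¹ v : Fin r) : ℕ) := hy
      have hyx2 : ((w⁻¹ v : Fin r) : ℕ) ≤ (x2 : ℕ) := by
        rcases eq_or_lt_of_le hvle with he | hlt'
        · have : v = w x2 := Fin.ext he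
          rw [this, Equiv.Perm.inv_apply_self]
        · have := mono2 v (w x2) hlt' (by rw [hbv, hbm])
          rw [Equiv.Perm.inv_apply_self] at this
          exact le_of_lt this
      have hx1p : (x1 : ℕ) + 1 < r := by have := x2.2; omega
      set y' : Fin r := ⟨(x1 : ℕ) + 1, hx1p⟩ with hy'
      have hy'val : (y' : ℕ) = (x1 : ℕ) + 1 := rfl
      have hyblk : blockOf l ((w⁻¹ v : Fin r) : ℕ) = blockOf l (x1 : ℕ) :=
        blockOf_between l hbl (by omega) hyx2
      have hby' : blockOf l (y' : ℕ) = blockOf l (x1 : ℕ) :=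
        blockOf_between l hbl (by omega) (by omega)
      have hwy' : w y' = v := by
        rcases eq_or_lt_of_le (show (y' : ℕ) ≤ ((w⁻¹ v : Fin r) : ℕ) by omega) with he | hlt'
        · have : y' = w⁻¹ v := Fin.ext he
          rw [this, Equiv.Perm.apply_inv_self]
        · exfalso
          have hlow : w x1 < w y' := mono1 x1 y' (by omega) hby'.symm
          have hhigh : w y' < w (w⁻¹ v) := mono1 y' (w⁻¹ v) hlt' (by rw [hby', hyblk])
          rw [Equiv.Perm.apply_inv_self] at hhigh
          have e1 : ((w x1 : Fin r) : ℕ) < ((w y' : Fin r) : ℕ) := hlow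
          have e2 : ((w y' : Fin r) : ℕ) < (v : ℕ) := hhigh
          omega
      exact hcfg x1 y' u v (by omega) (by omega) hby'.symm hbv.symm hu.symm hwy'
    have hne : (x1 : ℕ) ≠ (x2 : ℕ) := fun hc => hne12 (Fin.ext hc)
    rcases lt_or_gt_of_ne hne with hlt | hgt
    · exact main x1 x2 hlt (by rw [hx1.1, hx2.1]) (by rw [hx1.2, hx2.2])
    · exact main x2 x1 hgt (by rw [hx1.1, hx2.1]) (by rw [hx1.2, hx2.2])
  -- margins
  have cardL : ∀ i, i < len →
      ((Finset.univ : Finset (Fin r)).filter (fun x : Fin r => blockOf l (x : ℕ) = i)).card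
        = l.getD i 0 := by
    intro i hi
    have hb : ((Finset.univ : Finset (Fin r)).filter (fun x : Fin r => blockOf l (x : ℕ) = i)).card
        = ((Finset.range r).filter (fun t => blockOf l t = i)).card :=
      card_fin_filter (fun t => blockOf l t = i)
    rw [hb]
    have e : Finset.range r = Finset.range l.sum := by rw [hsum]
    rw [e, blockOf_count l i hi, List.getD_eq_getElem l 0 hi, List.get_eq_getElem]
  have cardM : ∀ j, j < K →
      ((Finset.univ : Finset (Fin r)).filter (fun z : Fin r => blockOf μ (z : ℕ) = j)).card
        = μ.getD j 0 := by
    intro j hj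
    have hb : ((Finset.univ : Finset (Fin r)).filter (fun z : Fin r => blockOf μ (z : ℕ) = j)).card
        = ((Finset.range r).filter (fun t => blockOf μ t = j)).card :=
      card_fin_filter (fun t => blockOf μ t = j)
    rw [hb]
    have e : Finset.range r = Finset.range μ.sum := by rw [hμsum]
    rw [e, blockOf_count μ j hj, List.getD_eq_getElem μ 0 hj, List.get_eq_getElem]
  have colcard : ∀ i, i < len → ∑ j ∈ Finset.range K, M j i = l.getD i 0 := by
    intro i hi
    have hfib : ((Finset.univ : Finset (Fin r)).filter (fun x : Fin r => blockOf l (x : ℕ) = i)).card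
        = ∑ j ∈ Finset.range K,
          (((Finset.univ : Finset (Fin r)).filter (fun x : Fin r => blockOf l (x : ℕ) = i)).filter
            (fun x => blockOf μ ((w x : Fin r) : ℕ) = j)).card :=
      Finset.card_eq_sum_card_fiberwise (fun x _ => by rw [Finset.mem_coe, Finset.mem_range]; exact bM (w x))
    have hstep : ∑ j ∈ Finset.range K, M j i
        = ∑ j ∈ Finset.range K,
          (((Finset.univ : Finset (Fin r)).filter (fun x : Fin r => blockOf l (x : ℕ) = i)).filter
            (fun x => blockOf μ ((w x : Fin r) : ℕ) = j)).card := by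
      apply Finset.sum_congr rfl
      intro j _
      simp only [hMdef]
      apply congrArg
      ext x
      simp only [Finset.mem_filter, Finset.mem_univ, true_and]
      all_goals tauto
    rw [hstep, ← hfib, cardL i hi]
  have rowcard : ∀ j, j < K → ∑ i ∈ Finset.range len, M j i = μ.getD j 0 := by
    intro j hj
    have hfib : ((Finset.univ : Finset (Fin r)).filter
        (fun x : Fin r => blockOf μ ((w x : Fin r) : ℕ) = j)).card
        = ∑ i ∈ Finset.range len,
          (((Finset.univ : Finset (Fin r)).filter
            (fun x : Fin r => blockOf μ ((w x : Fin r) : ℕ) = j)).filter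
            (fun x : Fin r => blockOf l (x : ℕ) = i)).card :=
      Finset.card_eq_sum_card_fiberwise (fun x _ => by rw [Finset.mem_coe, Finset.mem_range]; exact bL x)
    have hstep : ∑ i ∈ Finset.range len, M j i
        = ∑ i ∈ Finset.range len,
          (((Finset.univ : Finset (Fin r)).filter
            (fun x : Fin r => blockOf μ ((w x : Fin r) : ℕ) = j)).filter
            (fun x : Fin r => blockOf l (x : ℕ) = i)).card := by
      apply Finset.sum_congr rfl
      intro i _
      simp only [hMdef]
      apply congrArg
      ext x
      simp only [Finset.mem_filter, Finset.mem_univ, true_and]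
      all_goals tauto
    have hperm : ((Finset.univ : Finset (Fin r)).filter
        (fun x : Fin r => blockOf μ ((w x : Fin r) : ℕ) = j)).card
        = ((Finset.univ : Finset (Fin r)).filter
          (fun z : Fin r => blockOf μ (z : ℕ) = j)).card := by
      apply Finset.card_bij (fun (x : Fin r) (_ : x ∈ (Finset.univ : Finset (Fin r)).filter
        (fun x : Fin r => blockOf μ ((w x : Fin r) : ℕ) = j)) => w x)
      · intro x hx
        rw [Finset.mem_filter] at hx ⊢
        exact ⟨Finset.mem_univ _, hx.2⟩
      · intro x _ y _ hxy; exact w.injective hxy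
      · intro z hz
        rw [Finset.mem_filter] at hz
        refine ⟨w⁻¹ z, ?_, by rw [Equiv.Perm.apply_inv_self]⟩
        rw [Finset.mem_filter, Equiv.Perm.apply_inv_self]
        exact ⟨Finset.mem_univ _, hz.2⟩
    rw [hstep, ← hfib, hperm, cardM j hj]
  have hLamK : ∀ i, i < len → l.getD i 0 ≤ K := by
    intro i hi
    have h1' : l.getD i 0 ≤ l.foldr max 0 := by
      apply le_foldr_max
      rw [List.getD_eq_getElem _ _ hi]
      exact List.getElem_mem hi
    omega
  -- rigidity
  have hrig : ∀ j, j < K → ∀ i, i < len → M j i = if j < l.getD i 0 then 1 else 0 := by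
    intro j
    induction j using Nat.strong_induction_on with
    | _ j ih =>
      intro hj i hi
      have hz : ∀ i', i' < len → l.getD i' 0 ≤ j → M j i' = 0 := by
        intro i' hi' hle
        have hcol := colcard i' hi'
        have hsub : insert j (Finset.range (l.getD i' 0)) ⊆ Finset.range K := by
          intro t ht
          rcases Finset.mem_insert.mp ht with rfl | ht'
          · rw [Finset.mem_range]; omega
          · rw [Finset.mem_range] at ht' ⊢
            have := hLamK i' hi'
            omega
        have hsum1 : ∑ j' ∈ Finset.range (l.getD i' 0), M j' i' = l.getD i' 0 := by
          have hone : ∀ j' ∈ Finset.range (l.getD i' 0), M j' i' = 1 := by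
            intro j' hj'
            rw [Finset.mem_range] at hj'
            have hb := hLamK i' hi'
            rw [ih j' (by omega) (by omega) i' hi', if_pos hj']
          rw [Finset.sum_congr rfl hone, Finset.sum_const, smul_eq_mul, mul_one,
            Finset.card_range]
        have hmono := Finset.sum_le_sum_of_subset (f := fun j' => M j' i') hsub
        rw [Finset.sum_insert (by rw [Finset.mem_range]; omega), hsum1, hcol] at hmono
        omega
      by_cases hcase : l.getD i 0 ≤ j
      · rw [if_neg (by omega)]
        exact hz i hi hcase
      · push_neg at hcase
        rw [if_pos hcase]
        have hrow := rowcard j hj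
        have hμval : μ.getD j 0
            = ((Finset.range len).filter (fun i' => j < l.getD i' 0)).card := by
          rw [hμdef]
          exact conjP_card l j (by omega)
        set F := (Finset.range len).filter (fun i' => j < l.getD i' 0) with hF
        have hsum2 : ∑ i' ∈ F, M j i' = ∑ i' ∈ Finset.range len, M j i' := by
          apply Finset.sum_subset (Finset.filter_subset _ _)
          intro i' hi' hni'
          rw [Finset.mem_range] at hi'
          simp only [hF, Finset.mem_filter, Finset.mem_range, not_and, not_lt] at hni'
          exact hz i' hi' (hni' hi')
        by_contra hne1
        have hlt1 : M j i < 1 := by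
          have := hM1 j i
          omega
        have hstrict : ∑ i' ∈ F, M j i' < ∑ i' ∈ F, 1 := by
          apply Finset.sum_lt_sum
          · intro i' _; exact hM1 j i'
          · exact ⟨i, by simp only [hF, Finset.mem_filter, Finset.mem_range]; exact ⟨hi, hcase⟩, hlt1⟩
        rw [Finset.sum_const, smul_eq_mul, mul_one, hsum2, hrow, hμval] at hstrict
        exact absurd hstrict (lt_irrefl _)
  -- sortedness
  have hsorted : ∀ i'' i', i'' < i' → i' < len → l.getD i' 0 ≤ l.getD i'' 0 := by
    intro i'' i' hlt hi'
    have hi'' : i'' < l.length := by omega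
    have hrel := List.pairwise_iff_get.mp hl.1 ⟨i'', hi''⟩ ⟨i', hi'⟩ (by rw [Fin.mk_lt_mk]; omega)
    rw [List.getD_eq_getElem _ _ hi', List.getD_eq_getElem _ _ hi'']
    simpa [List.get_eq_getElem] using hrel
  -- the formula
  intro x
  set i := blockOf l (x : ℕ) with hidef
  have hiL : i < len := bL x
  have hS1 : (l.take i).sum ≤ (x : ℕ) := take_blockOf_le l (x : ℕ)
  have hS2 : (x : ℕ) < (l.take (i + 1)).sum := lt_take_blockOf_succ l (x : ℕ) hiL
  have hlam : (l.take (i + 1)).sum = (l.take i).sum + l.getD i 0 := by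
    rw [List.sum_take_succ l i hiL, List.getD_eq_getElem l 0 hiL]
  have htot : (l.take (i + 1)).sum ≤ r := by rw [← hsum]; exact take_sum_le l (i + 1)
  set S := (l.take i).sum with hSdef
  set p := (x : ℕ) - S with hpdef
  have hp : p < l.getD i 0 := by omega
  set f : ℕ → ℕ := fun k =>
    if h : S + k < r then blockOf μ ((w ⟨S + k, h⟩ : Fin r) : ℕ) else 0 with hfdef
  have hfeq : ∀ (k : ℕ) (hk : S + k < r),
      f k = blockOf μ ((w ⟨S + k, hk⟩ : Fin r) : ℕ) := by
    intro k hk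
    rw [hfdef]
    exact dif_pos hk
  have hblockk : ∀ k, k < l.getD i 0 → blockOf l (S + k) = i := by
    intro k hk
    rw [blockOf_eq_iff l _ i (by rw [hsum]; omega)]
    omega
  have hflt : ∀ k, k < l.getD i 0 → f k < l.getD i 0 := by
      -- bound
      intro k hk
      have hkr : S + k < r := by omega
      rw [hfeq k hkr]
      have hj'K : blockOf μ ((w ⟨S + k, hkr⟩ : Fin r) : ℕ) < K := bM _
      have hpos : 0 < M (blockOf μ ((w ⟨S + k, hkr⟩ : Fin r) : ℕ)) i := by
        rw [hMdef]
        apply Finset.card_pos.mpr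
        refine ⟨⟨S + k, hkr⟩, ?_⟩
        simp only [Finset.mem_filter, Finset.mem_univ, true_and]
        exact ⟨hblockk k hk, by trivial⟩
      have hr := hrig _ hj'K i hiL
      by_contra hcon
      rw [if_neg (by omega)] at hr
      omega
  have hfmono : ∀ a b, a < b → b < l.getD i 0 → f a < f b := by
      -- strict mono
      intro a b hab hb
      have har : S + a < r := by omega
      have hbr : S + b < r := by omega
      rw [hfeq a har, hfeq b hbr]
      have hwlt : w ⟨S + a, har⟩ < w ⟨S + b, hbr⟩ := by
        apply mono1
        · show S + a < S + b
          omega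
        · show blockOf l (S + a) = blockOf l (S + b)
          rw [hblockk a (by omega), hblockk b hb]
      have hble : blockOf μ ((w ⟨S + a, har⟩ : Fin r) : ℕ)
          ≤ blockOf μ ((w ⟨S + b, hbr⟩ : Fin r) : ℕ) :=
        blockOf_mono μ (le_of_lt hwlt)
      rcases lt_or_eq_of_le hble with h | h
      · exact h
      · exfalso
        have h2' : 1 < M (blockOf μ ((w ⟨S + a, har⟩ : Fin r) : ℕ)) i := by
          rw [hMdef]
          rw [Finset.one_lt_card]
          refine ⟨⟨S + a, har⟩, ?_, ⟨S + b, hbr⟩, ?_, ?_⟩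
          · simp only [Finset.mem_filter, Finset.mem_univ, true_and]
            exact ⟨hblockk a (by omega), by trivial⟩
          · simp only [Finset.mem_filter, Finset.mem_univ, true_and]
            exact ⟨hblockk b hb, h.symm⟩
          · intro hc
            rw [Fin.ext_iff] at hc
            simp only at hc
            omega
        have := hM1 (blockOf μ ((w ⟨S + a, har⟩ : Fin r) : ℕ)) i
        omega
  have hA := strictmono_id_of (l.getD i 0) f hflt hfmono
  -- conclude claim A
  have hxr : S + p < r := by have := x.2; omega
  have hxeq : (⟨S + p, hxr⟩ : Fin r) = x := Fin.ext (by simp only; omega)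
  have hpA : blockOf μ ((w x : Fin r) : ℕ) = p := by
    have hap := hA p hp
    rw [hfeq p hxr, hxeq] at hap
    exact hap
  -- claim B
  have hpK : p < K := by rw [← hpA]; exact bM (w x)
  have hS1' : (μ.take p).sum ≤ ((w x : Fin r) : ℕ) := by
    have := take_blockOf_le μ ((w x : Fin r) : ℕ)
    rwa [hpA] at this
  have hS2' : ((w x : Fin r) : ℕ) < (μ.take (p + 1)).sum := by
    have := lt_take_blockOf_succ μ ((w x : Fin r) : ℕ) (by rw [hpA]; exact hpK)
    rwa [hpA] at this
  have hmu : (μ.take (p + 1)).sum = (μ.take p).sum + μ.getD p 0 := by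
    rw [List.sum_take_succ μ p hpK, List.getD_eq_getElem μ 0 hpK]
  have htot' : (μ.take (p + 1)).sum ≤ r := by rw [← hμsum]; exact take_sum_le μ (p + 1)
  set S' := (μ.take p).sum with hS'def
  set g : ℕ → ℕ := fun k =>
    if h : S' + k < r then blockOf l ((w⁻¹ ⟨S' + k, h⟩ : Fin r) : ℕ) else 0 with hgdef
  have hgeq : ∀ (k : ℕ) (hk : S' + k < r),
      g k = blockOf l ((w⁻¹ ⟨S' + k, hk⟩ : Fin r) : ℕ) := by
    intro k hk
    rw [hgdef]
    exact dif_pos hk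
  have hblockk' : ∀ k, k < μ.getD p 0 → blockOf μ (S' + k) = p := by
    intro k hk
    rw [blockOf_eq_iff μ _ p (by rw [hμsum]; omega)]
    omega
  have hFrange : (Finset.range len).filter (fun t => p < l.getD t 0)
      = Finset.range (μ.getD p 0) := by
    have hdc := dc_eq_range ((Finset.range len).filter (fun t => p < l.getD t 0)) ?_
    · rw [hdc]
      congr 1
      rw [← conjP_card l p (by omega)]
    · intro a ha b hba
      simp only [Finset.mem_filter, Finset.mem_range] at ha ⊢
      exact ⟨by omega, lt_of_lt_of_le ha.2 (hsorted b a hba ha.1)⟩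
  have hglt : ∀ k, k < μ.getD p 0 → g k < μ.getD p 0 := by
      intro k hk
      have hkr : S' + k < r := by omega
      rw [hgeq k hkr]
      have hiL' : blockOf l ((w⁻¹ ⟨S' + k, hkr⟩ : Fin r) : ℕ) < len := bL _
      have hpos : 0 < M p (blockOf l ((w⁻¹ ⟨S' + k, hkr⟩ : Fin r) : ℕ)) := by
        rw [hMdef]
        apply Finset.card_pos.mpr
        refine ⟨w⁻¹ ⟨S' + k, hkr⟩, ?_⟩
        rw [Finset.mem_filter]
        refine ⟨Finset.mem_univ _, rfl, ?_⟩
        rw [Equiv.Perm.apply_inv_self]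
        exact hblockk' k hk
      have hr := hrig p hpK _ hiL'
      have hplt : p < l.getD (blockOf l ((w⁻¹ ⟨S' + k, hkr⟩ : Fin r) : ℕ)) 0 := by
        by_contra hcon
        rw [if_neg hcon] at hr
        omega
      have hmem : blockOf l ((w⁻¹ ⟨S' + k, hkr⟩ : Fin r) : ℕ)
          ∈ (Finset.range len).filter (fun t => p < l.getD t 0) := by
        simp only [Finset.mem_filter, Finset.mem_range]
        exact ⟨hiL', hplt⟩
      rw [hFrange, Finset.mem_range] at hmem
      exact hmem
  have hgmono : ∀ a b, a < b → b < μ.getD p 0 → g a < g b := by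
      intro a b hab hb
      have har : S' + a < r := by omega
      have hbr : S' + b < r := by omega
      rw [hgeq a har, hgeq b hbr]
      have hwlt : w⁻¹ ⟨S' + a, har⟩ < w⁻¹ ⟨S' + b, hbr⟩ := by
        apply mono2
        · show S' + a < S' + b
          omega
        · show blockOf μ (S' + a) = blockOf μ (S' + b)
          rw [hblockk' a (by omega), hblockk' b hb]
      have hble : blockOf l ((w⁻¹ ⟨S' + a, har⟩ : Fin r) : ℕ)
          ≤ blockOf l ((w⁻¹ ⟨S' + b, hbr⟩ : Fin r) : ℕ) :=
        blockOf_mono l (le_of_lt hwlt)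
      rcases lt_or_eq_of_le hble with h | h
      · exact h
      · exfalso
        have h2' : 1 < M p (blockOf l ((w⁻¹ ⟨S' + a, har⟩ : Fin r) : ℕ)) := by
          rw [hMdef]
          rw [Finset.one_lt_card]
          refine ⟨w⁻¹ ⟨S' + a, har⟩, ?_, w⁻¹ ⟨S' + b, hbr⟩, ?_, ?_⟩
          · rw [Finset.mem_filter]
            refine ⟨Finset.mem_univ _, rfl, ?_⟩
            rw [Equiv.Perm.apply_inv_self]
            exact hblockk' a (by omega)
          · rw [Finset.mem_filter]
            refine ⟨Finset.mem_univ _, h.symm, ?_⟩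
            rw [Equiv.Perm.apply_inv_self]
            exact hblockk' b hb
          · intro hc
            have := w⁻¹.injective hc
            rw [Fin.ext_iff] at this
            simp only at this
            omega
        have := hM1 p (blockOf l ((w⁻¹ ⟨S' + a, har⟩ : Fin r) : ℕ))
        omega
  have hB := strictmono_id_of (μ.getD p 0) g hglt hgmono
  -- conclude
  have hk0 : ((w x : Fin r) : ℕ) - S' < μ.getD p 0 := by omega
  have hk0r : S' + (((w x : Fin r) : ℕ) - S') < r := by have := (w x).2; omega
  have hzeq : (⟨S' + (((w x : Fin r) : ℕ) - S'), hk0r⟩ : Fin r) = w x :=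
    Fin.ext (by simp only; omega)
  have hgx := hB (((w x : Fin r) : ℕ) - S') hk0
  rw [hgeq _ hk0r, hzeq, Equiv.Perm.inv_apply_self] at hgx
  rw [← hidef] at hgx
  exact ⟨hpA, by omega⟩
end


section Algebra
variable {R : Type} [CommRing R] {H : Type} [Ring H] [Algebra R H]
variable {r : ℕ}

/-- Fin-pair form of the Hecke multiplication rules. -/
def HTm (q : Rˣ) (T : Equiv.Perm (Fin r) → H) : Prop :=
  ∀ (w : Equiv.Perm (Fin r)) (a b : Fin r), (b : ℕ) = (a : ℕ) + 1 →
    (permLen (Equiv.swap a b * w) = permLen w + 1 →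
      T w * T (Equiv.swap a b) = T (Equiv.swap a b * w)) ∧
    (permLen (Equiv.swap a b * w) < permLen w →
      T w * T (Equiv.swap a b) = (q : R) • T (Equiv.swap a b * w) + ((q : R) - 1) • T w)

variable (q : Rˣ) (T : Equiv.Perm (Fin r) → H)

lemma swap_ne_one {a b : Fin r} (hab : (b : ℕ) = (a : ℕ) + 1) : Equiv.swap a b ≠ 1 := by
  intro h
  have h2 : Equiv.swap a b a = a := by rw [h]; rfl
  rw [Equiv.swap_apply_left] at h2
  rw [h2] at hab
  omega

lemma permLen_swap_adj {a b : Fin r} (hab : (b : ℕ) = (a : ℕ) + 1) :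
    permLen (Equiv.swap a b) = 1 := by
  have h := permLen_swap_mul_of_lt hab 1 (by
    simp only [inv_one, Equiv.Perm.one_apply]
    rw [Fin.lt_def]; omega)
  rwa [mul_one, permLen_one] at h

lemma Tsq (hT1 : T 1 = 1) (hm : HTm q T) {a b : Fin r} (hab : (b : ℕ) = (a : ℕ) + 1) :
    T (Equiv.swap a b) * T (Equiv.swap a b)
      = (q : R) • (1 : H) + ((q : R) - 1) • T (Equiv.swap a b) := by
  have h := (hm (Equiv.swap a b) a b hab).2 (by
    rw [Equiv.swap_mul_self, permLen_one, permLen_swap_adj hab]; omega)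
  rwa [Equiv.swap_mul_self, hT1] at h

lemma left_descent_exists (v : Equiv.Perm (Fin r)) (hv : v ≠ 1) :
    ∃ a b : Fin r, (b : ℕ) = (a : ℕ) + 1 ∧ permLen v = permLen (Equiv.swap a b * v) + 1 := by
  obtain ⟨a, b, hab, hd⟩ := exists_descent v⁻¹ (inv_ne_one.mpr hv)
  rcases permLen_swap_mul hab v with ⟨hc, _⟩ | ⟨_, h⟩
  · exact absurd hc (asymm hd)
  · exact ⟨a, b, hab, h⟩

lemma T_mul_T (hT1 : T 1 = 1) (hm : HTm q T) :
    ∀ (u v : Equiv.Perm (Fin r)), permLen (v * u) = permLen v + permLen u →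
      T u * T v = T (v * u) := by
  intro u v
  generalize hn : permLen v = n
  induction n using Nat.strong_induction_on generalizing v with
  | _ n ih =>
    intro hadd
    by_cases hv : v = 1
    · subst hv; rw [hT1, mul_one, one_mul]
    · obtain ⟨a, b, hab, hdesc⟩ := left_descent_exists v hv
      have hvv : v = Equiv.swap a b * (Equiv.swap a b * v) := by
        rw [← mul_assoc, Equiv.swap_mul_self, one_mul]
      have hTv : T (Equiv.swap a b * v) * T (Equiv.swap a b) = T v := by
        have h := (hm (Equiv.swap a b * v) a b hab).1 (by rw [← hvv]; omega)
        rwa [← hvv] at h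
      have heq : v * u = Equiv.swap a b * ((Equiv.swap a b * v) * u) := by
        rw [← mul_assoc, ← hvv]
      have hl : permLen ((Equiv.swap a b * v) * u)
          = permLen (Equiv.swap a b * v) + permLen u := by
        have hsub := permLen_mul_le u (Equiv.swap a b * v)
        rcases permLen_swap_mul hab ((Equiv.swap a b * v) * u) with ⟨_, h⟩ | ⟨_, h⟩ <;>
          rw [← heq] at h <;> omega
      have ihh := ih (permLen (Equiv.swap a b * v)) (by omega) (Equiv.swap a b * v) rfl hl
      rw [← hTv, ← mul_assoc, ihh]
      have hfin := (hm ((Equiv.swap a b * v) * u) a b hab).1 (by rw [← heq]; omega)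
      rw [hfin, ← heq]

lemma x_factor (hT1 : T 1 = 1) (hm : HTm q T) (c : List ℕ) {a b : Fin r}
    (hab : (b : ℕ) = (a : ℕ) + 1) (hblk : blockOf c (a : ℕ) = blockOf c (b : ℕ)) :
    xEl T c = (∑ w ∈ Finset.univ.filter
        (fun w : Equiv.Perm (Fin r) => inYoung c w ∧ w⁻¹ a < w⁻¹ b), T w)
      * (1 + T (Equiv.swap a b)) := by
  have hys : inYoung c (Equiv.swap a b) := inYoung_swap c hblk
  have hne : ∀ w : Equiv.Perm (Fin r), w⁻¹ a ≠ w⁻¹ b := by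
    intro w h
    have := w⁻¹.injective h
    rw [Fin.ext_iff] at this; omega
  have hinv : ∀ w : Equiv.Perm (Fin r),
      (Equiv.swap a b * w)⁻¹ a = w⁻¹ b ∧ (Equiv.swap a b * w)⁻¹ b = w⁻¹ a := by
    intro w
    rw [mul_inv_rev, Equiv.swap_inv]
    constructor <;> rw [Equiv.Perm.mul_apply]
    · rw [Equiv.swap_apply_left]
    · rw [Equiv.swap_apply_right]
  rw [mul_add, mul_one, Finset.sum_mul]
  have hterm : ∀ w ∈ Finset.univ.filter
      (fun w : Equiv.Perm (Fin r) => inYoung c w ∧ w⁻¹ a < w⁻¹ b),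
      T w * T (Equiv.swap a b) = T (Equiv.swap a b * w) := by
    intro w hw
    rw [Finset.mem_filter] at hw
    exact (hm w a b hab).1 (permLen_swap_mul_of_lt hab w hw.2.2)
  rw [Finset.sum_congr rfl hterm]
  have hsplit : (Finset.univ.filter (fun w : Equiv.Perm (Fin r) => inYoung c w))
      = (Finset.univ.filter (fun w : Equiv.Perm (Fin r) => inYoung c w ∧ w⁻¹ a < w⁻¹ b))
        ∪ (Finset.univ.filter
          (fun w : Equiv.Perm (Fin r) => inYoung c w ∧ ¬(w⁻¹ a < w⁻¹ b))) := by
    ext w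
    simp only [Finset.mem_union, Finset.mem_filter, Finset.mem_univ, true_and]
    tauto
  have hdisj : Disjoint
      (Finset.univ.filter (fun w : Equiv.Perm (Fin r) => inYoung c w ∧ w⁻¹ a < w⁻¹ b))
      (Finset.univ.filter
        (fun w : Equiv.Perm (Fin r) => inYoung c w ∧ ¬(w⁻¹ a < w⁻¹ b))) := by
    rw [Finset.disjoint_left]
    intro w h1 h2
    rw [Finset.mem_filter] at h1 h2
    exact h2.2.2 h1.2.2
  have hbij : ∑ w ∈ Finset.univ.filter
      (fun w : Equiv.Perm (Fin r) => inYoung c w ∧ ¬(w⁻¹ a < w⁻¹ b)), T w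
      = ∑ w ∈ Finset.univ.filter
        (fun w : Equiv.Perm (Fin r) => inYoung c w ∧ w⁻¹ a < w⁻¹ b),
        T (Equiv.swap a b * w) := by
    apply Finset.sum_nbij' (i := fun w => Equiv.swap a b * w) (j := fun w => Equiv.swap a b * w)
    · intro w hw
      rw [Finset.mem_filter] at hw ⊢
      refine ⟨Finset.mem_univ _, inYoung_mul c hys hw.2.1, ?_⟩
      rw [(hinv w).1, (hinv w).2]
      rcases lt_or_gt_of_ne (hne w) with h | h
      · exact absurd h hw.2.2
      · exact h
    · intro w hw
      rw [Finset.mem_filter] at hw ⊢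
      refine ⟨Finset.mem_univ _, inYoung_mul c hys hw.2.1, ?_⟩
      rw [(hinv w).1, (hinv w).2, not_lt]
      exact le_of_lt hw.2.2
    · intro w _; rw [← mul_assoc, Equiv.swap_mul_self, one_mul]
    · intro w _; rw [← mul_assoc, Equiv.swap_mul_self, one_mul]
    · intro w _
      rw [← mul_assoc, Equiv.swap_mul_self, one_mul]
  rw [xEl, hsplit, Finset.sum_union hdisj, hbij]

lemma x_mul_Ts (hT1 : T 1 = 1) (hm : HTm q T) (c : List ℕ) {a b : Fin r}
    (hab : (b : ℕ) = (a : ℕ) + 1) (hblk : blockOf c (a : ℕ) = blockOf c (b : ℕ)) :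
    xEl T c * T (Equiv.swap a b) = (q : R) • xEl T c := by
  rw [x_factor q T hT1 hm c hab hblk, mul_assoc]
  have h : (1 + T (Equiv.swap a b)) * T (Equiv.swap a b)
      = (q : R) • (1 + T (Equiv.swap a b)) := by
    rw [add_mul, one_mul, Tsq q T hT1 hm hab, smul_add]
    rw [sub_smul, one_smul]
    abel
  rw [h, mul_smul_comm]

lemma y_factor (hT1 : T 1 = 1) (hm : HTm q T) (c : List ℕ) {a b : Fin r}
    (hab : (b : ℕ) = (a : ℕ) + 1) (hblk : blockOf c (a : ℕ) = blockOf c (b : ℕ)) :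
    yEl q T c = (1 - ((q⁻¹ : Rˣ) : R) • T (Equiv.swap a b)) *
      (∑ w ∈ Finset.univ.filter
        (fun w : Equiv.Perm (Fin r) => inYoung c w ∧ w a < w b),
        ((((-q)⁻¹ : Rˣ) : R) ^ permLen w) • T w) := by
  have hys : inYoung c (Equiv.swap a b) := inYoung_swap c hblk
  have hnegq : (((-q)⁻¹ : Rˣ) : R) = -((q⁻¹ : Rˣ) : R) := by
    rw [inv_neg]
    simp
  have hne : ∀ w : Equiv.Perm (Fin r), w a ≠ w b := by
    intro w h
    have := w.injective h
    rw [Fin.ext_iff] at this; omega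
  have happ : ∀ w : Equiv.Perm (Fin r),
      (w * Equiv.swap a b) a = w b ∧ (w * Equiv.swap a b) b = w a := by
    intro w
    constructor <;> rw [Equiv.Perm.mul_apply]
    · rw [Equiv.swap_apply_left]
    · rw [Equiv.swap_apply_right]
  rw [sub_mul, one_mul, smul_mul_assoc, Finset.mul_sum]
  have hterm : ∀ w ∈ Finset.univ.filter
      (fun w : Equiv.Perm (Fin r) => inYoung c w ∧ w a < w b),
      T (Equiv.swap a b) * (((((-q)⁻¹ : Rˣ) : R) ^ permLen w) • T w)
        = ((((-q)⁻¹ : Rˣ) : R) ^ permLen w) • T (w * Equiv.swap a b) := by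
    intro w hw
    rw [Finset.mem_filter] at hw
    rw [mul_smul_comm, T_mul_T q T hT1 hm (Equiv.swap a b) w
      (by rw [permLen_mul_swap_of_lt hab w hw.2.2, permLen_swap_adj hab])]
  rw [Finset.sum_congr rfl hterm, Finset.smul_sum]
  have hsplit : (Finset.univ.filter (fun w : Equiv.Perm (Fin r) => inYoung c w))
      = (Finset.univ.filter (fun w : Equiv.Perm (Fin r) => inYoung c w ∧ w a < w b))
        ∪ (Finset.univ.filter
          (fun w : Equiv.Perm (Fin r) => inYoung c w ∧ ¬(w a < w b))) := by
    ext w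
    simp only [Finset.mem_union, Finset.mem_filter, Finset.mem_univ, true_and]
    tauto
  have hdisj : Disjoint
      (Finset.univ.filter (fun w : Equiv.Perm (Fin r) => inYoung c w ∧ w a < w b))
      (Finset.univ.filter
        (fun w : Equiv.Perm (Fin r) => inYoung c w ∧ ¬(w a < w b))) := by
    rw [Finset.disjoint_left]
    intro w h1 h2
    rw [Finset.mem_filter] at h1 h2
    exact h2.2.2 h1.2.2
  have hbij : ∑ w ∈ Finset.univ.filter
      (fun w : Equiv.Perm (Fin r) => inYoung c w ∧ ¬(w a < w b)),
      ((((-q)⁻¹ : Rˣ) : R) ^ permLen w) • T w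
      = ∑ w ∈ Finset.univ.filter
        (fun w : Equiv.Perm (Fin r) => inYoung c w ∧ w a < w b),
        ((((-q)⁻¹ : Rˣ) : R) ^ permLen (w * Equiv.swap a b)) • T (w * Equiv.swap a b) := by
    apply Finset.sum_nbij' (i := fun w => w * Equiv.swap a b) (j := fun w => w * Equiv.swap a b)
    · intro w hw
      rw [Finset.mem_filter] at hw ⊢
      refine ⟨Finset.mem_univ _, inYoung_mul c hw.2.1 hys, ?_⟩
      rw [(happ w).1, (happ w).2]
      rcases lt_or_gt_of_ne (hne w) with h | h
      · exact absurd h hw.2.2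
      · exact h
    · intro w hw
      rw [Finset.mem_filter] at hw ⊢
      refine ⟨Finset.mem_univ _, inYoung_mul c hw.2.1 hys, ?_⟩
      rw [(happ w).1, (happ w).2, not_lt]
      exact le_of_lt hw.2.2
    · intro w _; rw [mul_assoc, Equiv.swap_mul_self, mul_one]
    · intro w _; rw [mul_assoc, Equiv.swap_mul_self, mul_one]
    · intro w _
      rw [mul_assoc, Equiv.swap_mul_self, mul_one]
  have hcoef : ∀ w ∈ Finset.univ.filter
      (fun w : Equiv.Perm (Fin r) => inYoung c w ∧ w a < w b),
      ((((-q)⁻¹ : Rˣ) : R) ^ permLen (w * Equiv.swap a b)) • T (w * Equiv.swap a b)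
      = -(((q⁻¹ : Rˣ) : R) • (((((-q)⁻¹ : Rˣ) : R) ^ permLen w) • T (w * Equiv.swap a b))) := by
    intro w hw
    rw [Finset.mem_filter] at hw
    rw [smul_smul, ← neg_smul]
    congr 1
    rw [permLen_mul_swap_of_lt hab w hw.2.2, pow_succ, hnegq]
    ring
  rw [yEl, hsplit, Finset.sum_union hdisj, hbij, Finset.sum_congr rfl hcoef,
    Finset.sum_neg_distrib, sub_eq_add_neg]

lemma Ts_mul_y (hT1 : T 1 = 1) (hm : HTm q T) (c : List ℕ) {a b : Fin r}
    (hab : (b : ℕ) = (a : ℕ) + 1) (hblk : blockOf c (a : ℕ) = blockOf c (b : ℕ)) :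
    T (Equiv.swap a b) * yEl q T c = -(yEl q T c) := by
  have key : T (Equiv.swap a b) * (1 - ((q⁻¹ : Rˣ) : R) • T (Equiv.swap a b))
      = -(1 - ((q⁻¹ : Rˣ) : R) • T (Equiv.swap a b)) := by
    rw [mul_sub, mul_one, mul_smul_comm, Tsq q T hT1 hm hab]
    have e1 : ((q⁻¹ : Rˣ) : R) * (q : R) = 1 := by
      rw [← Units.val_mul, inv_mul_cancel, Units.val_one]
    have e2 : ((q⁻¹ : Rˣ) : R) * ((q : R) - 1) = 1 - ((q⁻¹ : Rˣ) : R) := by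
      rw [mul_sub, e1, mul_one]
    rw [smul_add, smul_smul, smul_smul, e1, e2, one_smul, sub_smul, one_smul]
    abel
  rw [y_factor q T hT1 hm c hab hblk, ← mul_assoc, key, neg_mul]

lemma x_absorb (hT1 : T 1 = 1) (hm : HTm q T) (c : List ℕ) :
    ∀ (aperm : Equiv.Perm (Fin r)), inYoung c aperm →
      xEl T c * T aperm = ((q : R) ^ permLen aperm) • xEl T c := by
  intro aperm
  generalize hn : permLen aperm = n
  induction n using Nat.strong_induction_on generalizing aperm with
  | _ n ih =>
    intro hin
    by_cases h1 : aperm = 1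
    · subst h1; rw [hT1, mul_one, ← hn, permLen_one, pow_zero, one_smul]
    · obtain ⟨x, y, hxy, hblk, hd⟩ :=
        exists_block_descent c aperm⁻¹ (inYoung_inv c hin) (inv_ne_one.mpr h1)
      rcases permLen_swap_mul hxy aperm with ⟨hcc, _⟩ | ⟨_, hlen⟩
      · exact absurd hcc (asymm hd)
      · have hvv : aperm = Equiv.swap x y * (Equiv.swap x y * aperm) := by
          rw [← mul_assoc, Equiv.swap_mul_self, one_mul]
        have hTd : T (Equiv.swap x y * aperm) * T (Equiv.swap x y) = T aperm := by
          have h := (hm (Equiv.swap x y * aperm) x y hxy).1 (by rw [← hvv]; omega)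
          rwa [← hvv] at h
        have hin'' : inYoung c (Equiv.swap x y * aperm) :=
          inYoung_mul c (inYoung_swap c hblk) hin
        rw [← hTd, ← mul_assoc,
          ih (permLen (Equiv.swap x y * aperm)) (by omega) _ rfl hin'',
          smul_mul_assoc, x_mul_Ts q T hT1 hm c hxy hblk, smul_smul, ← pow_succ]
        congr 2
        omega

lemma y_absorb (hT1 : T 1 = 1) (hm : HTm q T) (c : List ℕ) :
    ∀ (bperm : Equiv.Perm (Fin r)), inYoung c bperm →
      T bperm * yEl q T c = ((-1 : R) ^ permLen bperm) • yEl q T c := by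
  intro bperm
  generalize hn : permLen bperm = n
  induction n using Nat.strong_induction_on generalizing bperm with
  | _ n ih =>
    intro hin
    by_cases h1 : bperm = 1
    · subst h1; rw [hT1, one_mul, ← hn, permLen_one, pow_zero, one_smul]
    · obtain ⟨x, y, hxy, hblk, hd⟩ :=
        exists_block_descent c bperm⁻¹ (inYoung_inv c hin) (inv_ne_one.mpr h1)
      rcases permLen_swap_mul hxy bperm with ⟨hcc, _⟩ | ⟨_, hlen⟩
      · exact absurd hcc (asymm hd)
      · have hvv : bperm = Equiv.swap x y * (Equiv.swap x y * bperm) := by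
          rw [← mul_assoc, Equiv.swap_mul_self, one_mul]
        have hTd : T (Equiv.swap x y * bperm) * T (Equiv.swap x y) = T bperm := by
          have h := (hm (Equiv.swap x y * bperm) x y hxy).1 (by rw [← hvv]; omega)
          rwa [← hvv] at h
        have hin'' : inYoung c (Equiv.swap x y * bperm) :=
          inYoung_mul c (inYoung_swap c hblk) hin
        rw [← hTd, mul_assoc, Ts_mul_y q T hT1 hm c hxy hblk, mul_neg,
          ih (permLen (Equiv.swap x y * bperm)) (by omega) _ rfl hin'']
        rw [← neg_smul]
        congr 1
        have h2 : n = permLen (Equiv.swap x y * bperm) + 1 := by omega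
        rw [h2, pow_succ]
        ring

end Algebra

section Additivity
variable {r : ℕ}

lemma permLen_inv (w : Equiv.Perm (Fin r)) : permLen w⁻¹ = permLen w := by
  rw [permLen_eq, permLen_eq]
  apply Finset.card_bij' (i := fun (q : Fin r × Fin r) (_ : q ∈ Invs w⁻¹) => (w⁻¹ q.2, w⁻¹ q.1))
    (j := fun (p : Fin r × Fin r) (_ : p ∈ Invs w) => (w p.2, w p.1))
  · intro q hq
    simp only [Invs, Finset.mem_filter, Finset.mem_univ, true_and] at hq ⊢
    refine ⟨hq.2, ?_⟩
    rw [Equiv.Perm.apply_inv_self, Equiv.Perm.apply_inv_self]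
    exact hq.1
  · intro p hp
    simp only [Invs, Finset.mem_filter, Finset.mem_univ, true_and] at hp ⊢
    refine ⟨hp.2, ?_⟩
    rw [Equiv.Perm.inv_apply_self, Equiv.Perm.inv_apply_self]
    exact hp.1
  · intro q _
    simp only [Equiv.Perm.apply_inv_self]
  · intro p _
    simp only [Equiv.Perm.inv_apply_self]

lemma perm_add_left (c : List ℕ) (u aperm : Equiv.Perm (Fin r))
    (hmono : ∀ x y : Fin r, (x : ℕ) < (y : ℕ) →
      blockOf c (x : ℕ) = blockOf c (y : ℕ) → u x < u y)
    (hin : inYoung c aperm) :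
    permLen (u * aperm) = permLen u + permLen aperm := by
  have hy := (inYoung_iff c aperm).mp hin
  have hy' := (inYoung_iff c aperm⁻¹).mp (inYoung_inv c hin)
  have hbo : ∀ x y : Fin r, blockOf c (x : ℕ) < blockOf c (y : ℕ) → x < y := by
    intro x y h
    by_contra hc
    rw [not_lt] at hc
    have := blockOf_mono c (show (y : ℕ) ≤ (x : ℕ) from hc)
    omega
  rw [permLen_eq, permLen_eq, permLen_eq]
  have hsplit : Invs (u * aperm)
      = (Invs (u * aperm)).filter (fun p => blockOf c ((p.1 : Fin r) : ℕ) = blockOf c ((p.2 : Fin r) : ℕ))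
        ∪ (Invs (u * aperm)).filter (fun p => ¬ blockOf c ((p.1 : Fin r) : ℕ) = blockOf c ((p.2 : Fin r) : ℕ)) :=
    (Finset.filter_union_filter_not_eq _ _).symm
  rw [hsplit, Finset.card_union_of_disjoint (Finset.disjoint_filter_filter_not _ _ _)]
  have hA : (Invs (u * aperm)).filter
      (fun p => blockOf c ((p.1 : Fin r) : ℕ) = blockOf c ((p.2 : Fin r) : ℕ)) = Invs aperm := by
    ext p
    simp only [Invs, Finset.mem_filter, Finset.mem_univ, true_and]
    simp only [Equiv.Perm.mul_apply]
    constructor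
    · rintro ⟨⟨h1, h2⟩, hb⟩
      refine ⟨h1, ?_⟩
      by_contra hcon
      rw [not_lt] at hcon
      rcases eq_or_lt_of_le hcon with he | hlt'
      · rw [he] at h2; exact lt_irrefl _ h2
      · have := hmono (aperm p.1) (aperm p.2) hlt' (by rw [hy p.1, hy p.2, hb])
        exact absurd h2 (asymm this)
    · rintro ⟨h1, h2⟩
      have hb : blockOf c ((p.1 : Fin r) : ℕ) = blockOf c ((p.2 : Fin r) : ℕ) := by
        have e1 := hy p.1
        have e2 := hy p.2
        have e3 : blockOf c ((p.1 : Fin r) : ℕ) ≤ blockOf c ((p.2 : Fin r) : ℕ) :=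
          blockOf_mono c (le_of_lt h1)
        have e4 : blockOf c ((aperm p.2 : Fin r) : ℕ) ≤ blockOf c ((aperm p.1 : Fin r) : ℕ) :=
          blockOf_mono c (le_of_lt h2)
        omega
      refine ⟨⟨h1, ?_⟩, hb⟩
      exact hmono _ _ h2 (by rw [hy p.1, hy p.2, hb])
  have hB : ((Invs (u * aperm)).filter
      (fun p => ¬ blockOf c ((p.1 : Fin r) : ℕ) = blockOf c ((p.2 : Fin r) : ℕ))).card
      = (Invs u).card := by
    apply Finset.card_bij' (i := fun (p : Fin r × Fin r) _ => (aperm p.1, aperm p.2))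
      (j := fun (q : Fin r × Fin r) _ => (aperm⁻¹ q.1, aperm⁻¹ q.2))
    · intro p hp
      simp only [Invs, Finset.mem_filter, Finset.mem_univ, true_and] at hp ⊢
      simp only [Equiv.Perm.mul_apply] at hp ⊢
      obtain ⟨⟨h1, h2⟩, hb⟩ := hp
      have hblt : blockOf c ((p.1 : Fin r) : ℕ) < blockOf c ((p.2 : Fin r) : ℕ) := by
        have := blockOf_mono c (le_of_lt (show (p.1 : ℕ) < (p.2 : ℕ) from h1))
        omega
      refine ⟨hbo _ _ ?_, h2⟩
      rw [hy p.1, hy p.2]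
      exact hblt
    · intro q hq
      simp only [Invs, Finset.mem_filter, Finset.mem_univ, true_and] at hq ⊢
      simp only [Equiv.Perm.mul_apply] at hq ⊢
      obtain ⟨h1, h2⟩ := hq
      have hbne : blockOf c ((q.1 : Fin r) : ℕ) ≠ blockOf c ((q.2 : Fin r) : ℕ) := by
        intro he
        exact absurd h2 (asymm (hmono q.1 q.2 h1 he))
      have hblt : blockOf c ((q.1 : Fin r) : ℕ) < blockOf c ((q.2 : Fin r) : ℕ) := by
        have := blockOf_mono c (le_of_lt (show (q.1 : ℕ) < (q.2 : ℕ) from h1))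
        omega
      refine ⟨⟨hbo _ _ ?_, ?_⟩, ?_⟩
      · rw [hy' q.1, hy' q.2]
        exact hblt
      · rw [Equiv.Perm.apply_inv_self, Equiv.Perm.apply_inv_self]
        exact h2
      · rw [hy' q.1, hy' q.2]
        omega
    · intro p _
      simp only [Equiv.Perm.inv_apply_self]
    · intro p _
      simp only [Equiv.Perm.apply_inv_self]
  rw [hA, hB]
  omega

end Additivity

lemma lt_of_blockOf_lt {r : ℕ} (c : List ℕ) {x y : Fin r}
    (h : blockOf c (x : ℕ) < blockOf c (y : ℕ)) : x < y := by
  by_contra hc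
  rw [not_lt] at hc
  have := blockOf_mono c (show (y : ℕ) ≤ (x : ℕ) from hc)
  omega

set_option maxHeartbeats 2000000 in
/-- Dipper–James: in the Hecke algebra of type `A_{r-1}`,
`x_λ H y_{λ'}` is a free `R`-module of rank 1 generated by
`z_λ = x_λ T_{w_λ} y_{λ'}`.  The Hecke algebra is presented through its
standard basis `T` indexed by permutations together with the multiplication
rules for a simple reflection. -/
theorem stmt10 (R : Type) [CommRing R] (H : Type) [Ring H] [Algebra R H]
    (r : ℕ) (q : Rˣ) (T : Equiv.Perm (Fin r) → H)
    (hT1 : T 1 = 1)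
    (hTmul : ∀ (w : Equiv.Perm (Fin r)) (i : ℕ) (h : i + 1 < r),
      (permLen (Equiv.swap (⟨i, by omega⟩ : Fin r) ⟨i + 1, h⟩ * w) = permLen w + 1 →
        T w * T (Equiv.swap (⟨i, by omega⟩ : Fin r) ⟨i + 1, h⟩) =
          T (Equiv.swap (⟨i, by omega⟩ : Fin r) ⟨i + 1, h⟩ * w)) ∧
      (permLen (Equiv.swap (⟨i, by omega⟩ : Fin r) ⟨i + 1, h⟩ * w) < permLen w →
        T w * T (Equiv.swap (⟨i, by omega⟩ : Fin r) ⟨i + 1, h⟩) =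
          (q : R) • T (Equiv.swap (⟨i, by omega⟩ : Fin r) ⟨i + 1, h⟩ * w)
            + ((q : R) - 1) • T w))
    (hTind : LinearIndependent R T)
    (hTspan : Submodule.span R (Set.range T) = ⊤)
    (l : List ℕ) (hl : IsPartition l) (hsum : l.sum = r)
    (wl : Equiv.Perm (Fin r))
    (hdist : IsDistinguished l (conjP l) wl)
    (htriv : ∀ τ : Equiv.Perm (Fin r), inYoung (conjP l) τ →
      inYoung l (wl⁻¹ * τ * wl) → τ = 1) :
    (∀ h : H, ∃ c : R,
      xEl T l * h * yEl q T (conjP l) =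
        c • (xEl T l * T wl * yEl q T (conjP l))) ∧
    (∀ c : R, c • (xEl T l * T wl * yEl q T (conjP l)) = 0 → c = 0) := by
  classical
  -- Fin-pair form of the multiplication rule
  have hm : HTm q T := by
    intro w a b hab
    have h : (a : ℕ) + 1 < r := by rw [← hab]; exact b.2
    have ea : (⟨(a : ℕ), by omega⟩ : Fin r) = a := Fin.ext rfl
    have eb : (⟨(a : ℕ) + 1, h⟩ : Fin r) = b := Fin.ext (by rw [hab])
    have h2 := hTmul w (a : ℕ) h
    rw [ea, eb] at h2
    exact h2
  -- wl has no descents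
  have hwl1 : ∀ x y : Fin r, (y : ℕ) = (x : ℕ) + 1 →
      blockOf l (x : ℕ) = blockOf l (y : ℕ) → wl x < wl y := by
    intro x y hxy hb
    rcases permLen_mul_swap hxy wl with ⟨h1, _⟩ | ⟨_, h2⟩
    · exact h1
    · exfalso
      have hd := hdist (Equiv.swap x y) 1 (inYoung_swap l hb) (inYoung_one (conjP l))
      rw [one_mul] at hd
      omega
  have hwl2 : ∀ x y : Fin r, (y : ℕ) = (x : ℕ) + 1 →
      blockOf (conjP l) (x : ℕ) = blockOf (conjP l) (y : ℕ) → wl⁻¹ x < wl⁻¹ y := by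
    intro x y hxy hb
    rcases permLen_swap_mul hxy wl with ⟨h1, _⟩ | ⟨_, h2⟩
    · exact h1
    · exfalso
      have hd := hdist 1 (Equiv.swap x y) (inYoung_one l) (inYoung_swap (conjP l) hb)
      rw [mul_one] at hd
      omega
  -- conjugation of adjacent pairs
  have hconj : ∀ (w : Equiv.Perm (Fin r)) (x y u v : Fin r),
      w x = u → w y = v →
      w⁻¹ * Equiv.swap u v * w = Equiv.swap x y := by
    intro w x y u v hwx hwy
    apply Equiv.ext
    intro z
    simp only [Equiv.Perm.mul_apply]
    rcases eq_or_ne z x with rfl | hzx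
    · rw [hwx, Equiv.swap_apply_left, ← hwy, Equiv.Perm.inv_apply_self, Equiv.swap_apply_left]
    · rcases eq_or_ne z y with rfl | hzy
      · rw [hwy, Equiv.swap_apply_right, ← hwx, Equiv.Perm.inv_apply_self,
          Equiv.swap_apply_right]
      · rw [Equiv.swap_apply_of_ne_of_ne (a := u) (b := v)
          (by intro hc; rw [← hwx] at hc; exact hzx (w.injective hc))
          (by intro hc; rw [← hwy] at hc; exact hzy (w.injective hc)),
          Equiv.Perm.inv_apply_self, Equiv.swap_apply_of_ne_of_ne hzx hzy]
  have hwlcfg : ∀ x y u v : Fin r, (y : ℕ) = (x : ℕ) + 1 → (v : ℕ) = (u : ℕ) + 1 →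
      blockOf l (x : ℕ) = blockOf l (y : ℕ) → blockOf (conjP l) (u : ℕ) = blockOf (conjP l) (v : ℕ) →
      wl x = u → wl y = v → False := by
    intro x y u v hxy huv hbl hbm hwx hwy
    have hs := hconj wl x y u v hwx hwy
    have h1 := htriv (Equiv.swap u v) (inYoung_swap (conjP l) hbm) (by
      rw [hs]
      exact inYoung_swap l hbl)
    exact swap_ne_one huv h1
  have hwlformula := dist_formula l hl hsum wl hwl1 hwl2 hwlcfg
  have mono1wl := mono_on_block l wl hwl1
  -- inverse block formula
  have hinvblk : ∀ z : Fin r, blockOf l ((wl⁻¹ z : Fin r) : ℕ)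
      = (z : ℕ) - ((conjP l).take (blockOf (conjP l) (z : ℕ))).sum := by
    intro z
    obtain ⟨hA, hF⟩ := hwlformula (wl⁻¹ z)
    rw [Equiv.Perm.apply_inv_self] at hA hF
    rw [hA]
    have hle := take_blockOf_le l ((wl⁻¹ z : Fin r) : ℕ)
    omega
  have humono : ∀ (aperm : Equiv.Perm (Fin r)), inYoung l aperm →
      ∀ x y : Fin r, (x : ℕ) < (y : ℕ) → blockOf (conjP l) (x : ℕ) = blockOf (conjP l) (y : ℕ) →
        (wl * aperm)⁻¹ x < (wl * aperm)⁻¹ y := by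
    intro aperm hina x y hlt hb
    have h1 := hinvblk x
    have h2 := hinvblk y
    have hta := take_blockOf_le (conjP l) (x : ℕ)
    have hblt : blockOf l ((wl⁻¹ x : Fin r) : ℕ) < blockOf l ((wl⁻¹ y : Fin r) : ℕ) := by
      rw [h1, h2, ← hb]
      omega
    rw [mul_inv_rev, Equiv.Perm.mul_apply, Equiv.Perm.mul_apply]
    have hy' := (inYoung_iff l aperm⁻¹).mp (inYoung_inv l hina)
    apply lt_of_blockOf_lt l
    rw [hy' (wl⁻¹ x), hy' (wl⁻¹ y)]
    exact hblt
  have haddA : ∀ aperm, inYoung l aperm →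
      permLen (wl * aperm) = permLen wl + permLen aperm :=
    fun aperm h => perm_add_left l wl aperm mono1wl h
  have haddB : ∀ aperm bperm, inYoung l aperm → inYoung (conjP l) bperm →
      permLen (bperm * (wl * aperm)) = permLen bperm + permLen (wl * aperm) := by
    intro aperm bperm hina hinb
    have h := perm_add_left (conjP l) (wl * aperm)⁻¹ bperm⁻¹ (humono aperm hina) (inYoung_inv (conjP l) hinb)
    rw [← mul_inv_rev, permLen_inv, permLen_inv, permLen_inv] at h
    omega
  have hTprod : ∀ aperm bperm, inYoung l aperm → inYoung (conjP l) bperm →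
      T aperm * T wl * T bperm = T (bperm * wl * aperm) := by
    intro a b ha hb
    have h1 : T a * T wl = T (wl * a) := T_mul_T q T hT1 hm a wl (haddA a ha)
    have h2 : T (wl * a) * T b = T (b * (wl * a)) :=
      T_mul_T q T hT1 hm (wl * a) b (haddB a b ha hb)
    rw [h1, h2, ← mul_assoc]
  set zel := xEl T l * T wl * yEl q T (conjP l) with hzel
  have hzexp : zel = ∑ a ∈ Finset.univ.filter (fun a : Equiv.Perm (Fin r) => inYoung l a),
      ∑ b ∈ Finset.univ.filter (fun b : Equiv.Perm (Fin r) => inYoung (conjP l) b),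
        ((((-q)⁻¹ : Rˣ) : R) ^ permLen b) • T (b * wl * a) := by
    rw [hzel, xEl, yEl, Finset.sum_mul, Finset.sum_mul]
    apply Finset.sum_congr rfl
    intro a ha
    rw [Finset.mul_sum]
    apply Finset.sum_congr rfl
    intro b hb
    rw [Finset.mem_filter] at ha hb
    rw [mul_smul_comm, hTprod a b ha.2 hb.2]
  have huniq : ∀ aperm bperm, inYoung l aperm → inYoung (conjP l) bperm →
      bperm * wl * aperm = wl → aperm = 1 ∧ bperm = 1 := by
    intro a b ha hb he
    have hb1 : b = 1 := by
      apply htriv b hb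
      have hx : wl⁻¹ * b * wl = a⁻¹ := by
        have h3 := congrArg (fun t => wl⁻¹ * t * a⁻¹) he
        simpa [mul_assoc] using h3
      rw [hx]
      exact inYoung_inv l ha
    subst hb1
    rw [one_mul] at he
    have ha1 : a = 1 := by
      have h3 := congrArg (fun t => wl⁻¹ * t) he
      simpa using h3
    exact ⟨ha1, rfl⟩
  -- main induction
  have hkey : ∀ n (w : Equiv.Perm (Fin r)), permLen w = n →
      ∃ cc : R, xEl T l * T w * yEl q T (conjP l) = cc • zel := by
    intro n
    induction n using Nat.strong_induction_on with
    | _ n ih =>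
      intro w hn
      by_cases hc1 : ∃ x y : Fin r, (y : ℕ) = (x : ℕ) + 1 ∧
          blockOf l (x : ℕ) = blockOf l (y : ℕ) ∧ w y < w x
      · obtain ⟨x, y, hxy, hblk, hd⟩ := hc1
        rcases permLen_mul_swap hxy w with ⟨hcc, _⟩ | ⟨_, hlen⟩
        · exact absurd hcc (asymm hd)
        · have hws : w = (w * Equiv.swap x y) * Equiv.swap x y := by
            rw [mul_assoc, Equiv.swap_mul_self, mul_one]
          have hTw : T (Equiv.swap x y) * T (w * Equiv.swap x y) = T w := by
            have h3 := T_mul_T q T hT1 hm (Equiv.swap x y) (w * Equiv.swap x y)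
              (by rw [← hws, permLen_swap_adj hxy]; omega)
            rwa [← hws] at h3
          obtain ⟨cc, hcc⟩ := ih (permLen (w * Equiv.swap x y)) (by omega)
            (w * Equiv.swap x y) rfl
          refine ⟨(q : R) * cc, ?_⟩
          rw [← hTw, ← mul_assoc, x_mul_Ts q T hT1 hm l hxy hblk,
            smul_mul_assoc, smul_mul_assoc, hcc, smul_smul]
      · by_cases hc2 : ∃ x y : Fin r, (y : ℕ) = (x : ℕ) + 1 ∧
            blockOf (conjP l) (x : ℕ) = blockOf (conjP l) (y : ℕ) ∧ w⁻¹ y < w⁻¹ x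
        · obtain ⟨x, y, hxy, hblk, hd⟩ := hc2
          rcases permLen_swap_mul hxy w with ⟨hcc, _⟩ | ⟨_, hlen⟩
          · exact absurd hcc (asymm hd)
          · have hws : w = Equiv.swap x y * (Equiv.swap x y * w) := by
              rw [← mul_assoc, Equiv.swap_mul_self, one_mul]
            have hTw : T (Equiv.swap x y * w) * T (Equiv.swap x y) = T w := by
              have h3 := (hm (Equiv.swap x y * w) x y hxy).1 (by rw [← hws]; omega)
              rwa [← hws] at h3
            obtain ⟨cc, hcc⟩ := ih (permLen (Equiv.swap x y * w)) (by omega)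
              (Equiv.swap x y * w) rfl
            refine ⟨-cc, ?_⟩
            rw [← hTw, ← mul_assoc, mul_assoc (xEl T l * T (Equiv.swap x y * w)),
              Ts_mul_y q T hT1 hm (conjP l) hxy hblk, mul_neg, hcc, ← neg_smul]
        · push_neg at hc1 hc2
          have h1w : ∀ x y : Fin r, (y : ℕ) = (x : ℕ) + 1 →
              blockOf l (x : ℕ) = blockOf l (y : ℕ) → w x < w y := by
            intro x y hxy hb
            have hne : w x ≠ w y := by
              intro h
              have := w.injective h
              rw [Fin.ext_iff] at this; omega
            rcases lt_or_gt_of_ne hne with h | h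
            · exact h
            · exact absurd h (not_lt.mpr (hc1 x y hxy hb))
          have h2w : ∀ x y : Fin r, (y : ℕ) = (x : ℕ) + 1 →
              blockOf (conjP l) (x : ℕ) = blockOf (conjP l) (y : ℕ) → w⁻¹ x < w⁻¹ y := by
            intro x y hxy hb
            have hne : w⁻¹ x ≠ w⁻¹ y := by
              intro h
              have := w⁻¹.injective h
              rw [Fin.ext_iff] at this; omega
            rcases lt_or_gt_of_ne hne with h | h
            · exact h
            · exact absurd h (not_lt.mpr (hc2 x y hxy hb))
          by_cases hc3 : ∃ x y u v : Fin r, (y : ℕ) = (x : ℕ) + 1 ∧ (v : ℕ) = (u : ℕ) + 1 ∧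
              blockOf l (x : ℕ) = blockOf l (y : ℕ) ∧
              blockOf (conjP l) (u : ℕ) = blockOf (conjP l) (v : ℕ) ∧ w x = u ∧ w y = v
          · obtain ⟨x, y, u, v, hxy, huv, hbl, hbm, hwx, hwy⟩ := hc3
            refine ⟨0, ?_⟩
            rw [zero_smul]
            have hsw : Equiv.swap u v * w = w * Equiv.swap x y := by
              have h3 := hconj w x y u v hwx hwy
              rw [← h3, ← mul_assoc, mul_inv_cancel_left]
            have hTws : T w * T (Equiv.swap u v) = T (Equiv.swap u v * w) :=
              (hm w u v huv).1 (permLen_swap_mul_of_lt huv w (by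
                have e1 : w⁻¹ u = x := by rw [← hwx, Equiv.Perm.inv_apply_self]
                have e2 : w⁻¹ v = y := by rw [← hwy, Equiv.Perm.inv_apply_self]
                rw [e1, e2, Fin.lt_def]
                omega))
            have hTtw : T (Equiv.swap x y) * T w = T (w * Equiv.swap x y) :=
              T_mul_T q T hT1 hm (Equiv.swap x y) w (by
                rw [permLen_mul_swap_of_lt hxy w (h1w x y hxy hbl), permLen_swap_adj hxy])
            rw [y_factor q T hT1 hm (conjP l) huv hbm, ← mul_assoc]
            have hzero : xEl T l * T w * (1 - ((q⁻¹ : Rˣ) : R) • T (Equiv.swap u v)) = 0 := by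
              rw [mul_sub, mul_one, mul_smul_comm, mul_assoc, hTws, hsw, ← hTtw,
                ← mul_assoc, x_mul_Ts q T hT1 hm l hxy hbl, smul_mul_assoc, smul_smul]
              rw [← Units.val_mul, inv_mul_cancel, Units.val_one, one_smul, sub_self]
            rw [hzero, zero_mul]
          · push_neg at hc3
            have hFw := dist_formula l hl hsum w h1w h2w (by
              intro x y u v h1 h2 h3 h4 h5 h6
              exact hc3 x y u v h1 h2 h3 h4 h5 h6)
            have hweq : w = wl := by
              apply Equiv.ext
              intro x
              apply Fin.ext
              rw [(hFw x).2, (hwlformula x).2]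
            exact ⟨1, by rw [hweq, one_smul]⟩
  -- basis coordinates
  have hBspan : ⊤ ≤ Submodule.span R (Set.range T) := by rw [hTspan]
  set B := Module.Basis.mk hTind hBspan with hBdef
  have hrepr : ∀ u : Equiv.Perm (Fin r), B.repr (T u) = Finsupp.single u 1 := by
    intro u
    have h3 : T u = B u := (Module.Basis.mk_apply hTind hBspan u).symm
    rw [h3, Module.Basis.repr_self]
  have hval : (B.repr zel) wl = 1 := by
    rw [hzexp, map_sum, Finset.sum_apply']
    have hinner : ∀ a ∈ Finset.univ.filter (fun a : Equiv.Perm (Fin r) => inYoung l a),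
        (B.repr (∑ b ∈ Finset.univ.filter (fun b : Equiv.Perm (Fin r) => inYoung (conjP l) b),
          ((((-q)⁻¹ : Rˣ) : R) ^ permLen b) • T (b * wl * a))) wl
        = if a = 1 then 1 else 0 := by
      intro a ha
      rw [Finset.mem_filter] at ha
      rw [map_sum, Finset.sum_apply']
      rw [Finset.sum_eq_single_of_mem 1
        (by rw [Finset.mem_filter]; exact ⟨Finset.mem_univ _, inYoung_one (conjP l)⟩) ?_]
      · rw [map_smul, Finsupp.smul_apply, hrepr, permLen_one, pow_zero, one_smul,
          Finsupp.single_apply]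
        have e : ((1 : Equiv.Perm (Fin r)) * wl * a = wl) ↔ (a = 1) := by
          rw [one_mul]
          constructor
          · intro h3
            have h4 := congrArg (fun t => wl⁻¹ * t) h3
            simpa using h4
          · intro h3; rw [h3, mul_one]
        simp only [e]
      · intro b hb hbne
        rw [Finset.mem_filter] at hb
        rw [map_smul, Finsupp.smul_apply, hrepr, Finsupp.single_apply]
        rw [if_neg, smul_zero]
        intro hc
        exact hbne (huniq a b ha.2 hb.2 hc).2
    rw [Finset.sum_congr rfl hinner, Finset.sum_ite_eq'
      (Finset.univ.filter (fun a : Equiv.Perm (Fin r) => inYoung l a)) 1 (fun _ => (1 : R))]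
    rw [if_pos (by rw [Finset.mem_filter]; exact ⟨Finset.mem_univ _, inYoung_one l⟩)]
  constructor
  · -- span statement
    intro h
    have hmem : h ∈ Submodule.span R (Set.range T) := hBspan Submodule.mem_top
    induction hmem using Submodule.span_induction with
    | mem x hx =>
      obtain ⟨u, rfl⟩ := hx
      exact hkey (permLen u) u rfl
    | zero => exact ⟨0, by rw [mul_zero, zero_mul, zero_smul]⟩
    | add x y _ _ hx hy =>
      obtain ⟨c1, h1⟩ := hx
      obtain ⟨c2, h2⟩ := hy
      exact ⟨c1 + c2, by rw [mul_add, add_mul, h1, h2, add_smul]⟩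
    | smul c x _ hx =>
      obtain ⟨c1, h1⟩ := hx
      exact ⟨c • c1, by rw [mul_smul_comm, smul_mul_assoc, h1, smul_smul, smul_eq_mul]⟩
  · -- freeness
    intro c hc
    have h0 := congrArg (fun v => (B.repr v) wl) hc
    simp only [map_zero, Finsupp.coe_zero, Pi.zero_apply, map_smul,
      Finsupp.smul_apply] at h0
    rw [hval, smul_eq_mul, mul_one] at h0
    exact h0
end
end
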